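/- Let B and C be finite open partial affine planes whose intersection A = B ∩ C is a common substructure (the incidence and parallelism relations of B and C agree on A), with A ≤_o B and A ≤_o C. Then there exist a finite open partial affine plane D and embeddings f : B → D and g : C → D with f↾A = g↾A such that f(B) ≤_o D and g(C) ≤_o D. In particular, the class of finite open partial affine planes with the relation ≤_o has the amalgamation and joint embedding properties. -/

import Mathlib

namespace Affine

variable {P L : Type}

/-- The lines of `X` incident with the point `p`. -/
def linesThru (I : P → L → Prop) (X : Set (P ⊕ L)) (p : P) : Set L :=
  {l : L | Sum.inr l ∈ X ∧ I p l}

/-- The points of `X` incident with the line `l`. -/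
def pointsOn (I : P → L → Prop) (X : Set (P ⊕ L)) (l : L) : Set P :=
  {p : P | Sum.inl p ∈ X ∧ I p l}

/-- An element is hyperfree in `X` if it is a point incident with at most two lines of `X`,
or a line incident with at most one point of `X`, or a line incident with exactly two points
of `X` and parallel to no other line of `X`. -/
def Hyperfree (I : P → L → Prop) (Par : L → L → Prop) (X : Set (P ⊕ L)) :
    (P ⊕ L) → Prop
  | Sum.inl p => (linesThru I X p).encard ≤ 2
  | Sum.inr l => (pointsOn I X l).encard ≤ 1 ∨
      ((pointsOn I X l).encard = 2 ∧
        ∀ l' : L, Sum.inr l' ∈ X → l' ≠ l → ¬ Par l l')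

/-- `B` is open over `A`. -/
def OpenOver (I : P → L → Prop) (Par : L → L → Prop) (A B : Set (P ⊕ L)) : Prop :=
  ∀ C : Set (P ⊕ L), C ⊆ B \ A → C.Finite → C.Nonempty →
    ∃ c ∈ C, Hyperfree I Par (A ∪ C) c

/-- `B` is open. -/
def IsOpen (I : P → L → Prop) (Par : L → L → Prop) (B : Set (P ⊕ L)) : Prop :=
  ∀ C : Set (P ⊕ L), C ⊆ B → C.Finite → C.Nonempty →
    ∃ c ∈ C, Hyperfree I Par C c

/-- `X` is a partial affine plane: parallelism is an equivalence relation on lines of `X`;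
two distinct points of `X` are incident with at most one common line of `X`; two non-parallel
lines of `X` are incident with at most one common point of `X`; for every point of `X` and
every line of `X` there is at most one line of `X` incident with the point and parallel to
the line. -/
def IsPartialAffine (I : P → L → Prop) (Par : L → L → Prop) (X : Set (P ⊕ L)) : Prop :=
  (∀ l : L, Sum.inr l ∈ X → Par l l) ∧
  (∀ l l' : L, Sum.inr l ∈ X → Sum.inr l' ∈ X → Par l l' → Par l' l) ∧
  (∀ l l' l'' : L, Sum.inr l ∈ X → Sum.inr l' ∈ X → Sum.inr l'' ∈ X →
    Par l l' → Par l' l'' → Par l l'') ∧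
  (∀ p q : P, p ≠ q → Sum.inl p ∈ X → Sum.inl q ∈ X →
    ∀ l l' : L, Sum.inr l ∈ X → Sum.inr l' ∈ X →
      I p l → I q l → I p l' → I q l' → l = l') ∧
  (∀ l l' : L, ¬ Par l l' → Sum.inr l ∈ X → Sum.inr l' ∈ X →
    ∀ p q : P, Sum.inl p ∈ X → Sum.inl q ∈ X →
      I p l → I p l' → I q l → I q l' → p = q) ∧
  (∀ p : P, Sum.inl p ∈ X → ∀ l : L, Sum.inr l ∈ X →
    ∀ l' l'' : L, Sum.inr l' ∈ X → Sum.inr l'' ∈ X →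
      I p l' → Par l' l → I p l'' → Par l'' l → l' = l'')

end Affine

open Affine

section Helpers

variable {P L : Type}

lemma encard_two_elems {α : Type*} {s : Set α} (h : s.encard ≤ 1) {a b : α}
    (ha : a ∈ s) (hb : b ∈ s) : a = b :=
  Set.encard_le_one_iff.mp h a b ha hb

lemma two_le_encard {α : Type*} {s : Set α} {a b : α} (ha : a ∈ s) (hb : b ∈ s)
    (hab : a ≠ b) : 2 ≤ s.encard := by
  have := Set.encard_le_encard (Set.pair_subset ha hb)
  rwa [Set.encard_pair hab] at this

lemma not_encard_le_two {α : Type*} {s : Set α} {a b c : α} (ha : a ∈ s) (hb : b ∈ s)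
    (hc : c ∈ s) (hab : a ≠ b) (hac : a ≠ c) (hbc : b ≠ c) : ¬ s.encard ≤ 2 := by
  intro h
  have h3 : ({a, b, c} : Set α).encard = 3 := by
    rw [Set.encard_insert_of_notMem (by simp [hab, hac]), Set.encard_pair hbc]; rfl
  have h4 := Set.encard_le_encard (show ({a, b, c} : Set α) ⊆ s by
    intro x hx; rcases hx with rfl | rfl | rfl <;> assumption)
  rw [h3] at h4
  have := h4.trans h
  norm_num at this

lemma encard_le_two_cases {α : Type*} {s : Set α} (h : s.encard ≤ 2) :
    s.encard ≤ 1 ∨ s.encard = 2 := by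
  rcases lt_or_eq_of_le h with h | h
  · exact Or.inl (Order.le_of_lt_add_one h)
  · exact Or.inr h

/-- Hyperfreeness only depends on the restriction of the relations to the set. -/
lemma hyperfree_congr {I I' : P → L → Prop} {Par Par' : L → L → Prop} {X : Set (P ⊕ L)}
    {x : P ⊕ L} (hx : x ∈ X)
    (hI : ∀ p l, Sum.inl p ∈ X → Sum.inr l ∈ X → (I p l ↔ I' p l))
    (hPar : ∀ l l', Sum.inr l ∈ X → Sum.inr l' ∈ X → (Par l l' ↔ Par' l l')) :
    Hyperfree I Par X x → Hyperfree I' Par' X x := by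
  have hlt : ∀ p, Sum.inl p ∈ X → linesThru I X p = linesThru I' X p := by
    intro p hp
    ext l; exact and_congr_right fun hl => hI p l hp hl
  have hpo : ∀ l, Sum.inr l ∈ X → pointsOn I X l = pointsOn I' X l := by
    intro l hl
    ext p; exact and_congr_right fun hp => hI p l hp hl
  rcases x with p | l
  · intro h; simpa [Hyperfree, ← hlt p hx] using h
  · intro h
    rcases h with h | ⟨h2, hnp⟩
    · exact Or.inl (by rwa [← hpo l hx])
    · refine Or.inr ⟨by rwa [← hpo l hx], fun l' hl' hne hp => ?_⟩
      exact hnp l' hl' hne ((hPar l l' hx hl').mpr hp)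

/-- The two-application trick: extending the base of an open extension by one element. -/
lemma openOver_insert {I : P → L → Prop} {Par : L → L → Prop} {X D : Set (P ⊕ L)}
    (hXD : OpenOver I Par X D) {d : P ⊕ L} (hd : d ∈ D) (hdX : d ∉ X)
    (H : ∀ S : Set (P ⊕ L), S ⊆ D \ insert d X → S.Finite →
      ∀ e ∈ S, Hyperfree I Par (X ∪ S) e → Hyperfree I Par (insert d X ∪ S) d →
        Hyperfree I Par (insert d X ∪ S) e) :
    OpenOver I Par (insert d X) D := by
  intro S hS hSfin hSne
  have hS' : S ⊆ D \ X := fun x hx =>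
    ⟨(hS hx).1, fun hxX => (hS hx).2 (Set.mem_insert_iff.mpr (Or.inr hxX))⟩
  have hdnS : d ∉ S := fun hdS => (hS hdS).2 (Set.mem_insert d X)
  obtain ⟨e₁, he₁S, he₁⟩ := hXD (insert d S)
    (Set.insert_subset ⟨hd, hdX⟩ hS') (hSfin.insert d) (Set.insert_nonempty d S)
  have hins : X ∪ insert d S = insert d X ∪ S := by
    rw [Set.union_insert, Set.insert_union]
  rcases Set.mem_insert_iff.mp he₁S with rfl | he₁S
  · -- the witness is d itself; apply again to S
    rw [hins] at he₁
    obtain ⟨e₂, he₂S, he₂⟩ := hXD S hS' hSfin hSne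
    exact ⟨e₂, he₂S, H S hS hSfin e₂ he₂S he₂ he₁⟩
  · rw [hins] at he₁
    exact ⟨e₁, he₁S, he₁⟩

lemma isPartialAffine_mono {I : P → L → Prop} {Par : L → L → Prop} {X Y : Set (P ⊕ L)}
    (h : IsPartialAffine I Par X) (hYX : Y ⊆ X) : IsPartialAffine I Par Y := by
  obtain ⟨h1, h2, h3, h4, h5, h6⟩ := h
  refine ⟨fun l hl => h1 l (hYX hl), fun l l' hl hl' => h2 l l' (hYX hl) (hYX hl'),
    fun l l' l'' hl hl' hl'' => h3 l l' l'' (hYX hl) (hYX hl') (hYX hl''),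
    fun p q hpq hp hq l l' hl hl' => h4 p q hpq (hYX hp) (hYX hq) l l' (hYX hl) (hYX hl'),
    fun l l' hnp hl hl' p q hp hq => h5 l l' hnp (hYX hl) (hYX hl') p q (hYX hp) (hYX hq),
    fun p hp l hl l' l'' hl' hl'' => h6 p (hYX hp) l (hYX hl) l' l'' (hYX hl') (hYX hl'')⟩

lemma isOpen_mono {I : P → L → Prop} {Par : L → L → Prop} {X Y : Set (P ⊕ L)}
    (h : IsOpen I Par X) (hYX : Y ⊆ X) : IsOpen I Par Y :=
  fun S hS hfin hne => h S (hS.trans hYX) hfin hne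

end Helpers

section Amalg

variable {P L : Type}

/-- membership in the image of a sort-preserving map -/
lemma mem_map_inl {P' L' : Type} {u : P → P'} {v : L → L'} {X : Set (P ⊕ L)} {a : P'} :
    Sum.inl a ∈ Sum.map u v '' X ↔ ∃ p, Sum.inl p ∈ X ∧ u p = a := by
  constructor
  · rintro ⟨y, hy, hmap⟩
    rcases y with p | l
    · exact ⟨p, hy, by simpa using hmap⟩
    · simp at hmap
  · rintro ⟨p, hp, rfl⟩
    exact ⟨Sum.inl p, hp, rfl⟩

lemma mem_map_inr {P' L' : Type} {u : P → P'} {v : L → L'} {X : Set (P ⊕ L)} {a : L'} :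
    Sum.inr a ∈ Sum.map u v '' X ↔ ∃ l, Sum.inr l ∈ X ∧ v l = a := by
  constructor
  · rintro ⟨y, hy, hmap⟩
    rcases y with p | l
    · simp at hmap
    · exact ⟨l, hy, by simpa using hmap⟩
  · rintro ⟨l, hl, rfl⟩
    exact ⟨Sum.inr l, hl, rfl⟩

/-- The conclusion of the inductive amalgamation lemma. -/
structure Pack (IB IC : P → L → Prop) (ParB ParC : L → L → Prop) (B C : Set (P ⊕ L))
    (ID : (P ⊕ P) → (L ⊕ L) → Prop) (ParD : (L ⊕ L) → (L ⊕ L) → Prop)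
    (D : Set ((P ⊕ P) ⊕ (L ⊕ L))) (fp : P → P ⊕ P) (fl : L → L ⊕ L) : Prop where
  fin : D.Finite
  pa : IsPartialAffine ID ParD D
  open_ : IsOpen ID ParD D
  mapsF : Set.MapsTo (Sum.map fp fl) B D
  mapsG : Set.MapsTo (Sum.map (Sum.inr : P → P ⊕ P) (Sum.inr : L → L ⊕ L)) C D
  injF : Set.InjOn (Sum.map fp fl) B
  embIB : ∀ p l, Sum.inl p ∈ B → Sum.inr l ∈ B → (ID (fp p) (fl l) ↔ IB p l)
  embParB : ∀ l l', Sum.inr l ∈ B → Sum.inr l' ∈ B → (ParD (fl l) (fl l') ↔ ParB l l')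
  embIC : ∀ p l, Sum.inl p ∈ C → Sum.inr l ∈ C → (ID (Sum.inr p) (Sum.inr l) ↔ IC p l)
  embParC : ∀ l l', Sum.inr l ∈ C → Sum.inr l' ∈ C →
    (ParD (Sum.inr l) (Sum.inr l') ↔ ParC l l')
  agree : ∀ x ∈ B ∩ C, Sum.map fp fl x = Sum.map (Sum.inr : P → P ⊕ P) (Sum.inr : L → L ⊕ L) x
  openF : OpenOver ID ParD (Sum.map fp fl '' B) D
  openG : OpenOver ID ParD (Sum.map (Sum.inr : P → P ⊕ P) (Sum.inr : L → L ⊕ L) '' C) D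
  union : D = Sum.map fp fl '' B ∪ Sum.map (Sum.inr : P → P ⊕ P) (Sum.inr : L → L ⊕ L) '' C
  inv : ∀ x ∈ B, Sum.map fp fl x = Sum.map (Sum.inl : P → P ⊕ P) (Sum.inl : L → L ⊕ L) x ∨
    Sum.map fp fl x ∈ Sum.map (Sum.inr : P → P ⊕ P) (Sum.inr : L → L ⊕ L) '' C

/-- The base-case structure on the doubled types: a copy of `C` on the `inr` side. -/
def ID0 (IC : P → L → Prop) : (P ⊕ P) → (L ⊕ L) → Prop
  | Sum.inr p, Sum.inr l => IC p l
  | _, _ => False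

def Par0 (ParC : L → L → Prop) : (L ⊕ L) → (L ⊕ L) → Prop
  | Sum.inr l, Sum.inr l' => ParC l l'
  | _, _ => False

lemma ginj : Function.Injective
    (Sum.map (Sum.inr : P → P ⊕ P) (Sum.inr : L → L ⊕ L)) :=
  Sum.map_injective.mpr ⟨Sum.inr_injective, Sum.inr_injective⟩

lemma linesThru0 (IC : P → L → Prop) (S : Set (P ⊕ L)) (p : P) :
    linesThru (ID0 IC) (Sum.map Sum.inr Sum.inr '' S) (Sum.inr p) =
      Sum.inr '' linesThru IC S p := by
  ext l
  constructor
  · rintro ⟨hl, hI⟩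
    obtain ⟨l₀, hl₀, rfl⟩ := mem_map_inr.mp hl
    rcases l₀ with l₀ -- nothing
    exact ⟨_, ⟨hl₀, hI⟩, rfl⟩
  · rintro ⟨l₀, ⟨hl₀, hI⟩, rfl⟩
    exact ⟨mem_map_inr.mpr ⟨l₀, hl₀, rfl⟩, hI⟩

lemma pointsOn0 (IC : P → L → Prop) (S : Set (P ⊕ L)) (l : L) :
    pointsOn (ID0 IC) (Sum.map Sum.inr Sum.inr '' S) (Sum.inr l) =
      Sum.inr '' pointsOn IC S l := by
  ext p
  constructor
  · rintro ⟨hp, hI⟩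
    obtain ⟨p₀, hp₀, rfl⟩ := mem_map_inl.mp hp
    exact ⟨_, ⟨hp₀, hI⟩, rfl⟩
  · rintro ⟨p₀, ⟨hp₀, hI⟩, rfl⟩
    exact ⟨mem_map_inl.mpr ⟨p₀, hp₀, rfl⟩, hI⟩

lemma hyperfree0 {IC : P → L → Prop} {ParC : L → L → Prop} {S : Set (P ⊕ L)} {x : P ⊕ L}
    (h : Hyperfree IC ParC S x) :
    Hyperfree (ID0 IC) (Par0 ParC) (Sum.map Sum.inr Sum.inr '' S)
      (Sum.map Sum.inr Sum.inr x) := by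
  rcases x with p | l
  · show (linesThru _ _ (Sum.inr p)).encard ≤ 2
    rw [linesThru0]
    exact le_trans (Set.encard_image_le _ _) h
  · show (pointsOn _ _ (Sum.inr l)).encard ≤ 1 ∨ _
    rw [pointsOn0]
    rcases h with h | ⟨h2, hnp⟩
    · exact Or.inl (le_trans (Set.encard_image_le _ _) h)
    · refine Or.inr ⟨?_, ?_⟩
      · rw [Set.InjOn.encard_image (Sum.inr_injective.injOn), h2]
      · intro l' hl' hne hP
        rcases l' with m | m
        · exact hP
        · obtain ⟨l₀, hl₀, hv⟩ := mem_map_inr.mp hl'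
          obtain rfl : l₀ = m := Sum.inr_injective hv
          exact hnp l₀ hl₀ (fun h => hne (by rw [h])) hP

lemma key_base (IB IC : P → L → Prop) (ParB ParC : L → L → Prop) (B C : Set (P ⊕ L))
    (hCfin : C.Finite) (hCpartial : IsPartialAffine IC ParC C)
    (hCopen : IsOpen IC ParC C)
    (hagreeI : ∀ p l, Sum.inl p ∈ B ∩ C → Sum.inr l ∈ B ∩ C → (IB p l ↔ IC p l))
    (hagreePar : ∀ l l', Sum.inr l ∈ B ∩ C → Sum.inr l' ∈ B ∩ C → (ParB l l' ↔ ParC l l'))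
    (hAC : OpenOver IC ParC (B ∩ C) C)
    (hBsub : B ⊆ C) :
    ∃ ID ParD D fp fl, Pack IB IC ParB ParC B C ID ParD D fp fl := by
  classical
  set g := Sum.map (Sum.inr : P → P ⊕ P) (Sum.inr : L → L ⊕ L) with hg
  have hBC : B ∩ C = B := Set.inter_eq_left.mpr hBsub
  refine ⟨ID0 IC, Par0 ParC, g '' C, Sum.inr, Sum.inr, ?_⟩
  have hmapeq : Sum.map (Sum.inr : P → P ⊕ P) (Sum.inr : L → L ⊕ L) = g := rfl
  -- preimage machinery
  have preim : ∀ S : Set ((P ⊕ P) ⊕ (L ⊕ L)), S ⊆ g '' C →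
      ∃ S₀ ⊆ C, g '' S₀ = S := by
    intro S hS
    refine ⟨{y ∈ C | g y ∈ S}, Set.sep_subset _ _, ?_⟩
    apply Set.Subset.antisymm
    · rintro x ⟨y, ⟨hy, hgy⟩, rfl⟩; exact hgy
    · intro x hx
      obtain ⟨y, hy, rfl⟩ := hS hx
      exact ⟨y, ⟨hy, hx⟩, rfl⟩
  constructor
  · exact hCfin.image g
  · -- partial affine
    obtain ⟨c1, c2, c3, c4, c5, c6⟩ := hCpartial
    refine ⟨?_, ?_, ?_, ?_, ?_, ?_⟩
    · intro l hl
      obtain ⟨l₀, hl₀, rfl⟩ := mem_map_inr.mp hl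
      exact c1 l₀ hl₀
    · intro l l' hl hl'
      obtain ⟨l₀, hl₀, rfl⟩ := mem_map_inr.mp hl
      obtain ⟨l₀', hl₀', rfl⟩ := mem_map_inr.mp hl'
      exact c2 l₀ l₀' hl₀ hl₀'
    · intro l l' l'' hl hl' hl''
      obtain ⟨l₀, hl₀, rfl⟩ := mem_map_inr.mp hl
      obtain ⟨l₀', hl₀', rfl⟩ := mem_map_inr.mp hl'
      obtain ⟨l₀'', hl₀'', rfl⟩ := mem_map_inr.mp hl''
      exact c3 l₀ l₀' l₀'' hl₀ hl₀' hl₀''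
    · intro p q hpq hp hq l l' hl hl'
      obtain ⟨p₀, hp₀, rfl⟩ := mem_map_inl.mp hp
      obtain ⟨q₀, hq₀, rfl⟩ := mem_map_inl.mp hq
      obtain ⟨l₀, hl₀, rfl⟩ := mem_map_inr.mp hl
      obtain ⟨l₀', hl₀', rfl⟩ := mem_map_inr.mp hl'
      intro h1 h2 h3 h4
      have := c4 p₀ q₀ (fun h => hpq (by rw [h])) hp₀ hq₀ l₀ l₀' hl₀ hl₀' h1 h2 h3 h4
      rw [this]
    · intro l l' hnp hl hl' p q hp hq
      obtain ⟨l₀, hl₀, rfl⟩ := mem_map_inr.mp hl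
      obtain ⟨l₀', hl₀', rfl⟩ := mem_map_inr.mp hl'
      obtain ⟨p₀, hp₀, rfl⟩ := mem_map_inl.mp hp
      obtain ⟨q₀, hq₀, rfl⟩ := mem_map_inl.mp hq
      intro h1 h2 h3 h4
      have := c5 l₀ l₀' hnp hl₀ hl₀' p₀ q₀ hp₀ hq₀ h1 h2 h3 h4
      rw [this]
    · intro p hp l hl l' l'' hl' hl''
      obtain ⟨p₀, hp₀, rfl⟩ := mem_map_inl.mp hp
      obtain ⟨l₀, hl₀, rfl⟩ := mem_map_inr.mp hl
      obtain ⟨l₀', hl₀', rfl⟩ := mem_map_inr.mp hl'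
      obtain ⟨l₀'', hl₀'', rfl⟩ := mem_map_inr.mp hl''
      intro h1 h2 h3 h4
      have := c6 p₀ hp₀ l₀ hl₀ l₀' l₀'' hl₀' hl₀'' h1 h2 h3 h4
      rw [this]
  · -- IsOpen
    intro S hS hSfin hSne
    obtain ⟨S₀, hS₀C, rfl⟩ := preim S hS
    have hS₀fin : S₀.Finite := hCfin.subset hS₀C
    have hS₀ne : S₀.Nonempty := by
      obtain ⟨x, y, hy, rfl⟩ := hSne
      exact ⟨y, hy⟩
    obtain ⟨c, hcS, hc⟩ := hCopen S₀ hS₀C hS₀fin hS₀ne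
    exact ⟨g c, ⟨c, hcS, rfl⟩, hyperfree0 hc⟩
  · exact fun x hx => ⟨x, hBsub hx, rfl⟩
  · exact fun x hx => ⟨x, hx, rfl⟩
  · exact (ginj.injOn)
  · intro p l hp hl
    exact (hagreeI p l (by rw [hBC]; exact hp) (by rw [hBC]; exact hl)).symm
  · intro l l' hl hl'
    exact (hagreePar l l' (by rw [hBC]; exact hl) (by rw [hBC]; exact hl')).symm
  · intro p l hp hl; exact Iff.rfl
  · intro l l' hl hl'; exact Iff.rfl
  · intro x hx; rfl
  · -- OpenOver (g '' B)
    intro S hS hSfin hSne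
    have hS' : S ⊆ g '' C \ g '' B := hS
    obtain ⟨S₀, hS₀C, rfl⟩ := preim S (fun x hx => (hS hx).1)
    have hS₀fin : S₀.Finite := hCfin.subset hS₀C
    have hS₀ne : S₀.Nonempty := by
      obtain ⟨x, y, hy, rfl⟩ := hSne
      exact ⟨y, hy⟩
    have hS₀sub : S₀ ⊆ C \ (B ∩ C) := by
      intro y hy
      refine ⟨hS₀C hy, fun hyB => ?_⟩
      exact (hS' ⟨y, hy, rfl⟩).2 ⟨y, hyB.1, rfl⟩
    obtain ⟨c, hcS, hc⟩ := hAC S₀ hS₀sub hS₀fin hS₀ne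
    refine ⟨g c, ⟨c, hcS, rfl⟩, ?_⟩
    have := hyperfree0 (ParC := ParC) hc
    rw [Set.image_union] at this
    have himB : g '' (B ∩ C) = g '' B := by rw [hBC]
    rwa [himB] at this
  · -- OpenOver (g '' C)
    intro S hS hSfin hSne
    obtain ⟨x, hx⟩ := hSne
    exact absurd ((hS hx).2 (hS hx).1) (fun h => h)
  · exact (Set.union_eq_right.mpr (Set.image_mono hBsub)).symm
  · intro x hx; exact Or.inr ⟨x, hBsub hx, rfl⟩

end Amalg

section Insert

variable {P L : Type} {I : P → L → Prop} {Par : L → L → Prop} {X : Set (P ⊕ L)}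

lemma mem_insert_inl_iff_line {q : P} {l : L} :
    Sum.inr l ∈ insert (Sum.inl q) X ↔ Sum.inr l ∈ X := by
  simp [Set.mem_insert_iff]

lemma mem_insert_inr_iff_point {q : L} {p : P} :
    Sum.inl p ∈ insert (Sum.inr q) X ↔ Sum.inl p ∈ X := by
  simp [Set.mem_insert_iff]

lemma linesThru_insert_inl (q : P) (p : P) :
    linesThru I (insert (Sum.inl q) X) p = linesThru I X p := by
  ext l; simp [linesThru, Set.mem_insert_iff]

lemma pointsOn_insert_inr (q : L) (l : L) :
    pointsOn I (insert (Sum.inr q) X) l = pointsOn I X l := by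
  ext p; simp [pointsOn, Set.mem_insert_iff]

lemma pointsOn_insert_inl_of_not {q : P} {l : L} (h : ¬ I q l) :
    pointsOn I (insert (Sum.inl q) X) l = pointsOn I X l := by
  ext p
  constructor
  · rintro ⟨hm, hI⟩
    rcases Set.mem_insert_iff.mp hm with heq | hm'
    · obtain rfl : p = q := Sum.inl_injective heq
      exact absurd hI h
    · exact ⟨hm', hI⟩
  · rintro ⟨hm, hI⟩
    exact ⟨Set.mem_insert_iff.mpr (Or.inr hm), hI⟩

lemma linesThru_insert_inr_of_not {q : L} {p : P} (h : ¬ I p q) :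
    linesThru I (insert (Sum.inr q) X) p = linesThru I X p := by
  ext l
  constructor
  · rintro ⟨hm, hI⟩
    rcases Set.mem_insert_iff.mp hm with heq | hm'
    · obtain rfl : l = q := Sum.inr_injective heq
      exact absurd hI h
    · exact ⟨hm', hI⟩
  · rintro ⟨hm, hI⟩
    exact ⟨Set.mem_insert_iff.mpr (Or.inr hm), hI⟩

lemma hyperfree_insert_point {q : P} {e : P ⊕ L} (he : Hyperfree I Par X e)
    (hq : ∀ el, e = Sum.inr el → ¬ I q el) :
    Hyperfree I Par (insert (Sum.inl q) X) e := by
  rcases e with p | el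
  · show (linesThru I (insert (Sum.inl q) X) p).encard ≤ 2
    rwa [linesThru_insert_inl]
  · have hpo : pointsOn I (insert (Sum.inl q) X) el = pointsOn I X el :=
      pointsOn_insert_inl_of_not (hq el rfl)
    rcases he with h | ⟨h2, hnp⟩
    · exact Or.inl (by rwa [hpo])
    · refine Or.inr ⟨by rwa [hpo], fun l' hl' hne hP => ?_⟩
      exact hnp l' (mem_insert_inl_iff_line.mp hl') hne hP

lemma hyperfree_insert_line {q : L} {e : P ⊕ L} (he : Hyperfree I Par X e)
    (h1 : ∀ ep, e = Sum.inl ep → ¬ I ep q)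
    (h2 : ∀ el, e = Sum.inr el → q ≠ el →
      ¬ Par el q ∨ (pointsOn I X el).encard ≤ 1) :
    Hyperfree I Par (insert (Sum.inr q) X) e := by
  rcases e with p | el
  · show (linesThru I (insert (Sum.inr q) X) p).encard ≤ 2
    rwa [linesThru_insert_inr_of_not (h1 p rfl)]
  · have hpo : pointsOn I (insert (Sum.inr q) X) el = pointsOn I X el :=
      pointsOn_insert_inr q el
    rcases he with h | ⟨h2', hnp⟩
    · exact Or.inl (by rwa [hpo])
    · by_cases hqe : q = el
      · subst hqe
        refine Or.inr ⟨by rwa [hpo], fun l' hl' hne hP => ?_⟩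
        rcases Set.mem_insert_iff.mp hl' with heq | hm'
        · exact absurd (Sum.inr_injective heq) hne
        · exact hnp l' hm' hne hP
      · rcases h2 el rfl hqe with hnpq | hle
        · refine Or.inr ⟨by rwa [hpo], fun l' hl' hne hP => ?_⟩
          rcases Set.mem_insert_iff.mp hl' with heq | hm'
          · obtain rfl : l' = q := Sum.inr_injective heq
            exact hnpq hP
          · exact hnp l' hm' hne hP
        · exact Or.inl (by rwa [hpo])

end Insert

section StepPoint

variable {P L : Type}

lemma key_step_point (IB IC : P → L → Prop) (ParB ParC : L → L → Prop)
    (B C : Set (P ⊕ L)) (bp : P)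
    (hBpartial : IsPartialAffine IB ParB B)
    (hb : Sum.inl bp ∈ B) (hbC : Sum.inl bp ∉ C)
    (hfb : (linesThru IB B bp).encard ≤ 2)
    {ID : (P ⊕ P) → (L ⊕ L) → Prop} {ParD : (L ⊕ L) → (L ⊕ L) → Prop}
    {D : Set ((P ⊕ P) ⊕ (L ⊕ L))} {fp : P → P ⊕ P} {fl : L → L ⊕ L}
    (pk : Pack IB IC ParB ParC (B \ {Sum.inl bp}) C ID ParD D fp fl) :
    ∃ ID' ParD' D' fp' fl', Pack IB IC ParB ParC B C ID' ParD' D' fp' fl' := by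
  classical
  set B' : Set (P ⊕ L) := B \ {Sum.inl bp} with hB'def
  set F : Set ((P⊕P) ⊕ (L⊕L)) := Sum.map fp fl '' B' with hFdef
  set G : Set ((P⊕P) ⊕ (L⊕L)) :=
    Sum.map (Sum.inr : P → P⊕P) (Sum.inr : L → L⊕L) '' C with hGdef
  have hlineB : ∀ l : L, Sum.inr l ∈ B' ↔ Sum.inr l ∈ B :=
    fun l => ⟨fun h => h.1, fun h => ⟨h, by simp⟩⟩
  have hptB : ∀ p : P, Sum.inl p ∈ B' ↔ (Sum.inl p ∈ B ∧ p ≠ bp) := by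
    intro p
    constructor
    · exact fun h => ⟨h.1, fun he => h.2 (by simp [he])⟩
    · exact fun h => ⟨h.1, by simp [h.2]⟩
  have hBins : insert (Sum.inl bp) B' = B := by
    rw [hB'def, Set.insert_diff_singleton, Set.insert_eq_self.mpr hb]
  have hflinj : ∀ {l l' : L}, Sum.inr l ∈ B → Sum.inr l' ∈ B → fl l = fl l' → l = l' := by
    intro l l' hl hl' he
    have := pk.injF ((hlineB l).mpr hl) ((hlineB l').mpr hl')
      (show Sum.map fp fl (Sum.inr l) = Sum.map fp fl (Sum.inr l') by simp [he])
    exact Sum.inr_injective this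
  have hflF : ∀ {l : L}, Sum.inr l ∈ B → Sum.inr (fl l) ∈ F :=
    fun {l} hl => ⟨Sum.inr l, (hlineB l).mpr hl, rfl⟩
  have hFD : F ⊆ D := pk.mapsF.image_subset
  have hGD : G ⊆ D := pk.mapsG.image_subset
  have hflD : ∀ {l : L}, Sum.inr l ∈ B → Sum.inr (fl l) ∈ D := fun {l} hl => hFD (hflF hl)
  have hfpD : ∀ {p : P}, Sum.inl p ∈ B' → Sum.inl (fp p) ∈ D :=
    fun {p} hp => pk.mapsF hp
  have hDne : ∀ x : P ⊕ P, Sum.inl x ∈ D → x ≠ Sum.inl bp := by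
    intro x hx hxeq
    subst hxeq
    rcases (pk.union ▸ hx) with hF | hG
    · obtain ⟨p, hp, hfp⟩ := mem_map_inl.mp hF
      rcases pk.inv (Sum.inl p) hp with h | h
      · simp only [Sum.map_inl] at h
        have hfpp : fp p = Sum.inl p := Sum.inl_injective h
        rw [hfpp] at hfp
        obtain rfl : p = bp := Sum.inl_injective hfp
        exact ((hptB p).mp hp).2 rfl
      · rw [show Sum.map fp fl (Sum.inl p) = Sum.inl (fp p) from rfl] at h
        obtain ⟨p₀, _, hfp₀⟩ := mem_map_inl.mp h
        rw [hfp] at hfp₀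
        exact absurd hfp₀ (by simp)
    · obtain ⟨p₀, _, hfp₀⟩ := mem_map_inl.mp hG
      exact absurd hfp₀ (by simp)
  have hnopar : ∀ l1 l2 : L, Sum.inr l1 ∈ B → Sum.inr l2 ∈ B → IB bp l1 → IB bp l2 →
      l1 ≠ l2 → ¬ ParB l1 l2 := by
    intro l1 l2 h1 h2 i1 i2 hne hpar
    exact hne (hBpartial.2.2.2.2.2 bp hb l1 h1 l1 l2 h1 h2 i1 (hBpartial.1 l1 h1) i2
      (hBpartial.2.1 l1 l2 h1 h2 hpar))
  have hLbtwo : ∀ l1 l2 l3 : L, Sum.inr l1 ∈ B → Sum.inr l2 ∈ B → Sum.inr l3 ∈ B →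
      IB bp l1 → IB bp l2 → IB bp l3 → l1 ≠ l2 → l1 ≠ l3 → l2 ≠ l3 → False := by
    intro l1 l2 l3 h1 h2 h3 i1 i2 i3 n12 n13 n23
    exact not_encard_le_two (s := linesThru IB B bp) ⟨h1, i1⟩ ⟨h2, i2⟩ ⟨h3, i3⟩ n12 n13 n23 hfb
  by_cases hconf : ∃ l1 l2 : L, Sum.inr l1 ∈ B ∧ Sum.inr l2 ∈ B ∧ l1 ≠ l2 ∧
      IB bp l1 ∧ IB bp l2 ∧ ∃ d : P ⊕ P, Sum.inl d ∈ D ∧ ID d (fl l1) ∧ ID d (fl l2)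
  · -- identification case: send bp to the existing point d
    obtain ⟨l1, l2, hl1, hl2, hne12, hi1, hi2, d, hdD, hd1, hd2⟩ := hconf
    set fp' : P → P ⊕ P := fun x => if x = bp then d else fp x with hfp'def
    have hfp'bp : fp' bp = d := if_pos rfl
    have hfp'eq : ∀ p : P, p ≠ bp → fp' p = fp p := fun p hp => if_neg hp
    have hfeq : ∀ x ∈ B', Sum.map fp' fl x = Sum.map fp fl x := by
      rintro (p | l) hx
      · simp [hfp'eq p ((hptB p).mp hx).2]
      · rfl
    have hFeq : Sum.map fp' fl '' B' = F := Set.image_congr hfeq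
    have hmapb : Sum.map fp' fl (Sum.inl bp) = Sum.inl d := by simp [hfp'bp]
    have himB : Sum.map fp' fl '' B = insert (Sum.inl d) F := by
      rw [← hBins, Set.image_insert_eq, hFeq, hmapb]
    have hdF : Sum.inl d ∉ F := by
      intro hdF
      obtain ⟨q, hq, hfq⟩ := mem_map_inl.mp hdF
      have hq1 : IB q l1 := (pk.embIB q l1 hq ((hlineB l1).mpr hl1)).mp (by rw [hfq]; exact hd1)
      have hq2 : IB q l2 := (pk.embIB q l2 hq ((hlineB l2).mpr hl2)).mp (by rw [hfq]; exact hd2)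
      have hqbp : q ≠ bp := ((hptB q).mp hq).2
      exact hne12 (hBpartial.2.2.2.1 q bp hqbp ((hptB q).mp hq).1 hb l1 l2 hl1 hl2
        hq1 hi1 hq2 hi2)
    have hdG : Sum.inl d ∈ G := (pk.union ▸ hdD).resolve_left hdF
    have hnew : ∀ l : L, Sum.inr l ∈ B → (ID d (fl l) ↔ IB bp l) := by
      intro l hl
      constructor
      · intro hIDl
        by_contra hnI
        have hne1 : l ≠ l1 := fun h => hnI (h ▸ hi1)
        have hne2 : l ≠ l2 := fun h => hnI (h ▸ hi2)
        obtain ⟨c, hcS, hc⟩ := pk.openF {Sum.inl d}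
          (by rw [Set.singleton_subset_iff]; exact ⟨hdD, hdF⟩) (Set.finite_singleton _)
          (Set.singleton_nonempty _)
        obtain rfl : c = Sum.inl d := hcS
        have hc' : (linesThru ID (F ∪ {Sum.inl d}) d).encard ≤ 2 := hc
        refine not_encard_le_two (s := linesThru ID (F ∪ {Sum.inl d}) d)
          (a := fl l1) (b := fl l2) (c := fl l)
          ⟨Or.inl (hflF hl1), hd1⟩ ⟨Or.inl (hflF hl2), hd2⟩ ⟨Or.inl (hflF hl), hIDl⟩
          (fun h => hne12 (hflinj hl1 hl2 h))
          (fun h => hne1 (hflinj hl1 hl h).symm)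
          (fun h => hne2 (hflinj hl2 hl h).symm) hc'
      · intro hI
        rcases eq_or_ne l l1 with rfl | n1
        · exact hd1
        rcases eq_or_ne l l2 with rfl | n2
        · exact hd2
        exact absurd (hLbtwo l1 l2 l hl1 hl2 hl hi1 hi2 hI hne12 n1.symm n2.symm) id
    refine ⟨ID, ParD, D, fp', fl, ?_⟩
    refine ⟨pk.fin, pk.pa, pk.open_, ?_, pk.mapsG, ?_, ?_, ?_, pk.embIC, pk.embParC,
      ?_, ?_, pk.openG, ?_, ?_⟩
    · -- mapsF
      intro x hx
      rcases eq_or_ne x (Sum.inl bp) with rfl | hxb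
      · rw [hmapb]; exact hdD
      · rw [hfeq x ⟨hx, by simpa using hxb⟩]
        exact pk.mapsF ⟨hx, by simpa using hxb⟩
    · -- injF
      intro x hx y hy he
      rcases eq_or_ne x (Sum.inl bp) with rfl | hxb
      · rcases eq_or_ne y (Sum.inl bp) with rfl | hyb
        · rfl
        · have hyB' : y ∈ B' := ⟨hy, by simpa using hyb⟩
          rw [hmapb, hfeq y hyB'] at he
          exact absurd (he ▸ ⟨y, hyB', rfl⟩ : Sum.inl d ∈ F) hdF
      · rcases eq_or_ne y (Sum.inl bp) with rfl | hyb
        · have hxB' : x ∈ B' := ⟨hx, by simpa using hxb⟩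
          rw [hmapb, hfeq x hxB'] at he
          exact absurd (he ▸ ⟨x, hxB', rfl⟩ : Sum.inl d ∈ F) hdF
        · have hxB' : x ∈ B' := ⟨hx, by simpa using hxb⟩
          have hyB' : y ∈ B' := ⟨hy, by simpa using hyb⟩
          rw [hfeq x hxB', hfeq y hyB'] at he
          exact pk.injF hxB' hyB' he
    · -- embIB
      intro p l hp hl
      by_cases hpbp : p = bp
      · subst hpbp
        rw [hfp'bp]
        exact hnew l hl
      · rw [hfp'eq p hpbp]
        exact pk.embIB p l ((hptB p).mpr ⟨hp, hpbp⟩) ((hlineB l).mpr hl)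
    · -- embParB
      intro l l' hl hl'
      exact pk.embParB l l' ((hlineB l).mpr hl) ((hlineB l').mpr hl')
    · -- agree
      intro x hx
      have hxB' : x ∈ B' ∩ C := ⟨⟨hx.1, by
        simp only [Set.mem_singleton_iff]
        rintro rfl
        exact hbC hx.2⟩, hx.2⟩
      rw [hfeq x hxB'.1]
      exact pk.agree x hxB'
    · -- openF
      rw [himB]
      apply openOver_insert pk.openF hdD hdF
      intro S hS hSfin e heS he hd_
      rw [Set.insert_union] at hd_ ⊢
      apply hyperfree_insert_point he
      intro el heel hIDdel
      subst heel
      have hd2' : (linesThru ID (insert (Sum.inl d) (F ∪ S)) d).encard ≤ 2 := hd_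
      have helF : Sum.inr el ∉ F := fun h => (hS heS).2 (Set.mem_insert_iff.mpr (Or.inr h))
      refine not_encard_le_two (s := linesThru ID (insert (Sum.inl d) (F ∪ S)) d)
        (a := fl l1) (b := fl l2) (c := el)
        ⟨Set.mem_insert_iff.mpr (Or.inr (Or.inl (hflF hl1))), hd1⟩
        ⟨Set.mem_insert_iff.mpr (Or.inr (Or.inl (hflF hl2))), hd2⟩
        ⟨Set.mem_insert_iff.mpr (Or.inr (Or.inr heS)), hIDdel⟩
        (fun h => hne12 (hflinj hl1 hl2 h))
        (fun h => helF (h ▸ hflF hl1))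
        (fun h => helF (h ▸ hflF hl2)) hd2'
    · -- union
      rw [himB, Set.insert_union, ← pk.union]
      exact (Set.insert_eq_self.mpr hdD).symm
    · -- inv
      intro x hx
      rcases eq_or_ne x (Sum.inl bp) with rfl | hxb
      · right
        rw [hmapb]
        exact hdG
      · have hxB' : x ∈ B' := ⟨hx, by simpa using hxb⟩
        rw [hfeq x hxB']
        exact pk.inv x hxB'
  · -- fresh case: add a brand new point
    have hnoconf : ∀ l1 l2 : L, ∀ d : P ⊕ P, Sum.inr l1 ∈ B → Sum.inr l2 ∈ B → l1 ≠ l2 →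
        IB bp l1 → IB bp l2 → Sum.inl d ∈ D → ID d (fl l1) → ID d (fl l2) → False :=
      fun l1 l2 d h1 h2 hne i1 i2 hd hd1 hd2 =>
        hconf ⟨l1, l2, h1, h2, hne, i1, i2, d, hd, hd1, hd2⟩
    set dp : P ⊕ P := Sum.inl bp with hdpdef
    set fp' : P → P ⊕ P := fun x => if x = bp then dp else fp x with hfp'def
    set ID' : (P ⊕ P) → (L ⊕ L) → Prop :=
      fun x y => (x = dp ∧ ∃ l : L, Sum.inr l ∈ B ∧ IB bp l ∧ y = fl l) ∨
        (x ≠ dp ∧ ID x y) with hID'def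
    set D' : Set ((P⊕P) ⊕ (L⊕L)) := insert (Sum.inl dp) D with hD'def
    have hfresh : Sum.inl dp ∉ D := fun h => hDne dp h rfl
    have hID'ne : ∀ (x : P ⊕ P) (y : L ⊕ L), x ≠ dp → (ID' x y ↔ ID x y) := by
      intro x y hx
      constructor
      · rintro (⟨heq, -⟩ | ⟨-, h⟩)
        · exact absurd heq hx
        · exact h
      · exact fun h => Or.inr ⟨hx, h⟩
    have hID'old : ∀ (x : P ⊕ P) (y : L ⊕ L), Sum.inl x ∈ D → (ID' x y ↔ ID x y) :=
      fun x y hx => hID'ne x y (hDne x hx)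
    have hID'new : ∀ y : L ⊕ L, ID' dp y ↔ ∃ l : L, Sum.inr l ∈ B ∧ IB bp l ∧ y = fl l := by
      intro y
      constructor
      · rintro (⟨-, h⟩ | ⟨hne, -⟩)
        · exact h
        · exact absurd rfl hne
      · exact fun h => Or.inl ⟨rfl, h⟩
    have hlineD' : ∀ l : L ⊕ L, Sum.inr l ∈ D' ↔ Sum.inr l ∈ D := fun l =>
      mem_insert_inl_iff_line
    have hptD' : ∀ x : P ⊕ P, Sum.inl x ∈ D' → x = dp ∨ Sum.inl x ∈ D := by
      intro x hx
      rcases Set.mem_insert_iff.mp hx with h | h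
      · exact Or.inl (Sum.inl_injective h)
      · exact Or.inr h
    have hfp'bp : fp' bp = dp := if_pos rfl
    have hfp'eq : ∀ p : P, p ≠ bp → fp' p = fp p := fun p hp => if_neg hp
    have hfeq : ∀ x ∈ B', Sum.map fp' fl x = Sum.map fp fl x := by
      rintro (p | l) hx
      · simp [hfp'eq p ((hptB p).mp hx).2]
      · rfl
    have hFeq : Sum.map fp' fl '' B' = F := Set.image_congr hfeq
    have hmapb : Sum.map fp' fl (Sum.inl bp) = Sum.inl dp := by simp [hfp'bp]
    have himB : Sum.map fp' fl '' B = insert (Sum.inl dp) F := by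
      rw [← hBins, Set.image_insert_eq, hFeq, hmapb]
    have hgen : ∀ X : Set ((P⊕P) ⊕ (L⊕L)),
        linesThru ID' X dp ⊆ fl '' linesThru IB B bp := by
      rintro X y ⟨hy, hIy⟩
      obtain ⟨la, hla, hIa, rfl⟩ := (hID'new y).mp hIy
      exact ⟨la, ⟨hla, hIa⟩, rfl⟩
    have hdpfree : ∀ X : Set ((P⊕P) ⊕ (L⊕L)), (linesThru ID' X dp).encard ≤ 2 :=
      fun X => le_trans (Set.encard_le_encard (hgen X))
        (le_trans (Set.encard_image_le _ _) hfb)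
    obtain ⟨d1, d2, d3, d4, d5, d6⟩ := pk.pa
    refine ⟨ID', ParD, D', fp', fl, ?_⟩
    refine ⟨pk.fin.insert _, ?_, ?_, ?_, fun x hx => Set.mem_insert_iff.mpr
      (Or.inr (pk.mapsG hx)), ?_, ?_, ?_, ?_, ?_, ?_, ?_, ?_, ?_, ?_⟩
    · -- IsPartialAffine
      refine ⟨fun l hl => d1 l ((hlineD' l).mp hl),
        fun l l' hl hl' => d2 l l' ((hlineD' l).mp hl) ((hlineD' l').mp hl'),
        fun l l' l'' hl hl' hl'' => d3 l l' l'' ((hlineD' l).mp hl) ((hlineD' l').mp hl')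
          ((hlineD' l'').mp hl''), ?_, ?_, ?_⟩
      · -- ax4
        intro p q hpq hp hq l l' hl hl' h1 h2 h3 h4
        rw [hlineD'] at hl hl'
        by_cases hpd : p = dp
        · subst hpd
          by_cases hqd : q = dp
          · exact absurd hqd.symm hpq
          · have hqD : Sum.inl q ∈ D := (hptD' q hq).resolve_left hqd
            obtain ⟨la, hla, hIa, rfl⟩ := (hID'new l).mp h1
            obtain ⟨lb, hlb, hIb, rfl⟩ := (hID'new l').mp h3
            rcases eq_or_ne la lb with rfl | hnab
            · rfl
            · exact absurd (hnoconf la lb q hla hlb hnab hIa hIb hqD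
                ((hID'old q _ hqD).mp h2) ((hID'old q _ hqD).mp h4)) id
        · by_cases hqd : q = dp
          · subst hqd
            have hpD : Sum.inl p ∈ D := (hptD' p hp).resolve_left hpd
            obtain ⟨la, hla, hIa, rfl⟩ := (hID'new l).mp h2
            obtain ⟨lb, hlb, hIb, rfl⟩ := (hID'new l').mp h4
            rcases eq_or_ne la lb with rfl | hnab
            · rfl
            · exact absurd (hnoconf la lb p hla hlb hnab hIa hIb hpD
                ((hID'old p _ hpD).mp h1) ((hID'old p _ hpD).mp h3)) id
          · have hpD : Sum.inl p ∈ D := (hptD' p hp).resolve_left hpd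
            have hqD : Sum.inl q ∈ D := (hptD' q hq).resolve_left hqd
            exact d4 p q hpq hpD hqD l l' hl hl' ((hID'old p _ hpD).mp h1)
              ((hID'old q _ hqD).mp h2) ((hID'old p _ hpD).mp h3)
              ((hID'old q _ hqD).mp h4)
      · -- ax5
        intro l l' hnp hl hl' p q hp hq h1 h2 h3 h4
        rw [hlineD'] at hl hl'
        by_cases hpd : p = dp
        · by_cases hqd : q = dp
          · rw [hpd, hqd]
          · subst hpd
            have hqD : Sum.inl q ∈ D := (hptD' q hq).resolve_left hqd
            obtain ⟨la, hla, hIa, rfl⟩ := (hID'new l).mp h1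
            obtain ⟨lb, hlb, hIb, rfl⟩ := (hID'new l').mp h2
            rcases eq_or_ne la lb with rfl | hnab
            · exact absurd (d1 _ (hflD hla)) hnp
            · exact absurd (hnoconf la lb q hla hlb hnab hIa hIb hqD
                ((hID'old q _ hqD).mp h3) ((hID'old q _ hqD).mp h4)) id
        · by_cases hqd : q = dp
          · subst hqd
            have hpD : Sum.inl p ∈ D := (hptD' p hp).resolve_left hpd
            obtain ⟨la, hla, hIa, rfl⟩ := (hID'new l).mp h3
            obtain ⟨lb, hlb, hIb, rfl⟩ := (hID'new l').mp h4
            rcases eq_or_ne la lb with rfl | hnab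
            · exact absurd (d1 _ (hflD hla)) hnp
            · exact absurd (hnoconf la lb p hla hlb hnab hIa hIb hpD
                ((hID'old p _ hpD).mp h1) ((hID'old p _ hpD).mp h2)) id
          · have hpD : Sum.inl p ∈ D := (hptD' p hp).resolve_left hpd
            have hqD : Sum.inl q ∈ D := (hptD' q hq).resolve_left hqd
            exact d5 l l' hnp hl hl' p q hpD hqD ((hID'old p _ hpD).mp h1)
              ((hID'old p _ hpD).mp h2) ((hID'old q _ hqD).mp h3)
              ((hID'old q _ hqD).mp h4)
      · -- ax6
        intro p hp l hl l' l'' hl' hl'' h1 hp1 h2 hp2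
        rw [hlineD'] at hl hl' hl''
        by_cases hpd : p = dp
        · subst hpd
          obtain ⟨la, hla, hIa, rfl⟩ := (hID'new l').mp h1
          obtain ⟨lb, hlb, hIb, rfl⟩ := (hID'new l'').mp h2
          rcases eq_or_ne la lb with rfl | hnab
          · rfl
          · have hplab : ParD (fl la) (fl lb) :=
              d3 _ _ _ (hflD hla) hl (hflD hlb) hp1 (d2 _ _ (hflD hlb) hl hp2)
            have : ParB la lb := (pk.embParB la lb ((hlineB la).mpr hla)
              ((hlineB lb).mpr hlb)).mp hplab
            exact absurd this (hnopar la lb hla hlb hIa hIb hnab)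
        · have hpD : Sum.inl p ∈ D := (hptD' p hp).resolve_left hpd
          exact d6 p hpD l hl l' l'' hl' hl'' ((hID'old p _ hpD).mp h1) hp1
            ((hID'old p _ hpD).mp h2) hp2
    · -- IsOpen
      intro S hS hSfin hSne
      by_cases hdpS : Sum.inl dp ∈ S
      · exact ⟨Sum.inl dp, hdpS, hdpfree S⟩
      · have hSD : S ⊆ D := fun x hx =>
          (Set.mem_insert_iff.mp (hS hx)).resolve_left (fun h => hdpS (h ▸ hx))
        obtain ⟨e, heS, he⟩ := pk.open_ S hSD hSfin hSne
        refine ⟨e, heS, hyperfree_congr heS ?_ (fun _ _ _ _ => Iff.rfl) he⟩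
        exact fun p l hp _ => ((hID'old p _ (hSD hp))).symm
    · -- mapsF
      intro x hx
      rcases eq_or_ne x (Sum.inl bp) with rfl | hxb
      · rw [hmapb]; exact Set.mem_insert _ _
      · rw [hfeq x ⟨hx, by simpa using hxb⟩]
        exact Set.mem_insert_iff.mpr (Or.inr (pk.mapsF ⟨hx, by simpa using hxb⟩))
    · -- injF
      intro x hx y hy he
      rcases eq_or_ne x (Sum.inl bp) with rfl | hxb
      · rcases eq_or_ne y (Sum.inl bp) with rfl | hyb
        · rfl
        · have hyB' : y ∈ B' := ⟨hy, by simpa using hyb⟩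
          rw [hmapb, hfeq y hyB'] at he
          exact absurd (he ▸ pk.mapsF hyB' : Sum.inl dp ∈ D) hfresh
      · rcases eq_or_ne y (Sum.inl bp) with rfl | hyb
        · have hxB' : x ∈ B' := ⟨hx, by simpa using hxb⟩
          rw [hmapb, hfeq x hxB'] at he
          exact absurd (he ▸ pk.mapsF hxB' : Sum.inl dp ∈ D) hfresh
        · have hxB' : x ∈ B' := ⟨hx, by simpa using hxb⟩
          have hyB' : y ∈ B' := ⟨hy, by simpa using hyb⟩
          rw [hfeq x hxB', hfeq y hyB'] at he
          exact pk.injF hxB' hyB' he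
    · -- embIB
      intro p l hp hl
      by_cases hpbp : p = bp
      · subst hpbp
        rw [hfp'bp]
        constructor
        · intro h
          obtain ⟨la, hla, hIa, hfla⟩ := (hID'new (fl l)).mp h
          obtain rfl : l = la := hflinj hl hla hfla
          exact hIa
        · exact fun h => (hID'new (fl l)).mpr ⟨l, hl, h, rfl⟩
      · rw [hfp'eq p hpbp]
        have hpD : Sum.inl (fp p) ∈ D := hfpD ((hptB p).mpr ⟨hp, hpbp⟩)
        rw [hID'old _ _ hpD]
        exact pk.embIB p l ((hptB p).mpr ⟨hp, hpbp⟩) ((hlineB l).mpr hl)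
    · -- embParB
      intro l l' hl hl'
      exact pk.embParB l l' ((hlineB l).mpr hl) ((hlineB l').mpr hl')
    · -- embIC
      intro p l hp hl
      have : (Sum.inr p : P ⊕ P) ≠ dp := by simp [hdpdef]
      rw [hID'ne _ _ this]
      exact pk.embIC p l hp hl
    · -- embParC
      exact pk.embParC
    · -- agree
      intro x hx
      have hxB' : x ∈ B' ∩ C := ⟨⟨hx.1, by
        simp only [Set.mem_singleton_iff]
        rintro rfl
        exact hbC hx.2⟩, hx.2⟩
      rw [hfeq x hxB'.1]
      exact pk.agree x hxB'
    · -- openF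
      rw [himB]
      intro S hS hSfin hSne
      have hSD : S ⊆ D \ F := by
        intro z hz
        have hz1 := (hS hz).1
        have hz2 := (hS hz).2
        rcases Set.mem_insert_iff.mp hz1 with h | h
        · exact absurd (h ▸ Set.mem_insert _ _) hz2
        · exact ⟨h, fun hzF => hz2 (Set.mem_insert_iff.mpr (Or.inr hzF))⟩
      obtain ⟨e, heS, he⟩ := pk.openF S hSD hSfin hSne
      refine ⟨e, heS, ?_⟩
      rw [Set.insert_union]
      have he' : Hyperfree ID' ParD (F ∪ S) e := by
        refine hyperfree_congr (Set.mem_union_right _ heS) ?_ (fun _ _ _ _ => Iff.rfl) he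
        intro p l hp _
        have hpD : Sum.inl p ∈ D := by
          rcases hp with h | h
          · exact hFD h
          · exact (hSD h).1
        exact (hID'old p _ hpD).symm
      apply hyperfree_insert_point he'
      intro el heel hIDdel
      subst heel
      obtain ⟨la, hla, hIa, rfl⟩ := (hID'new el).mp hIDdel
      exact (hSD heS).2 (hflF hla)
    · -- openG
      intro S hS hSfin hSne
      by_cases hdpS : Sum.inl dp ∈ S
      · exact ⟨Sum.inl dp, hdpS, hdpfree _⟩
      · have hSD : S ⊆ D \ G := by
          intro z hz
          have hz1 := (hS hz).1
          rcases Set.mem_insert_iff.mp hz1 with h | h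
          · exact absurd (h ▸ hdpS) (fun hh => hh hz)
          · exact ⟨h, (hS hz).2⟩
        obtain ⟨e, heS, he⟩ := pk.openG S hSD hSfin hSne
        refine ⟨e, heS, ?_⟩
        refine hyperfree_congr (Set.mem_union_right _ heS) ?_ (fun _ _ _ _ => Iff.rfl) he
        intro p l hp _
        have hpD : Sum.inl p ∈ D := by
          rcases hp with h | h
          · exact hGD h
          · exact (hSD h).1
        exact (hID'old p _ hpD).symm
    · -- union
      rw [himB, Set.insert_union, ← pk.union]
    · -- inv
      intro x hx
      rcases eq_or_ne x (Sum.inl bp) with rfl | hxb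
      · left
        rw [hmapb]
        rfl
      · have hxB' : x ∈ B' := ⟨hx, by simpa using hxb⟩
        rw [hfeq x hxB']
        exact pk.inv x hxB'

end StepPoint

section StepLine

variable {P L : Type}

lemma key_step_line (IB IC : P → L → Prop) (ParB ParC : L → L → Prop)
    (B C : Set (P ⊕ L)) (bl : L)
    (hBpartial : IsPartialAffine IB ParB B)
    (hb : Sum.inr bl ∈ B) (hbC : Sum.inr bl ∉ C)
    (hfb : Hyperfree IB ParB B (Sum.inr bl))
    {ID : (P ⊕ P) → (L ⊕ L) → Prop} {ParD : (L ⊕ L) → (L ⊕ L) → Prop}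
    {D : Set ((P ⊕ P) ⊕ (L ⊕ L))} {fp : P → P ⊕ P} {fl : L → L ⊕ L}
    (pk : Pack IB IC ParB ParC (B \ {Sum.inr bl}) C ID ParD D fp fl) :
    ∃ ID' ParD' D' fp' fl', Pack IB IC ParB ParC B C ID' ParD' D' fp' fl' := by
  classical
  obtain ⟨d1, d2, d3, d4, d5, d6⟩ := pk.pa
  set B' : Set (P ⊕ L) := B \ {Sum.inr bl} with hB'def
  set F : Set ((P⊕P) ⊕ (L⊕L)) := Sum.map fp fl '' B' with hFdef
  set G : Set ((P⊕P) ⊕ (L⊕L)) :=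
    Sum.map (Sum.inr : P → P⊕P) (Sum.inr : L → L⊕L) '' C with hGdef
  have hptB : ∀ p : P, Sum.inl p ∈ B' ↔ Sum.inl p ∈ B :=
    fun p => ⟨fun h => h.1, fun h => ⟨h, by simp⟩⟩
  have hlineB : ∀ l : L, Sum.inr l ∈ B' ↔ (Sum.inr l ∈ B ∧ l ≠ bl) := by
    intro l
    constructor
    · exact fun h => ⟨h.1, fun he => h.2 (by simp [he])⟩
    · exact fun h => ⟨h.1, by simp [h.2]⟩
  have hBins : insert (Sum.inr bl) B' = B := by
    rw [hB'def, Set.insert_diff_singleton, Set.insert_eq_self.mpr hb]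
  have hfpinj : ∀ {p q : P}, Sum.inl p ∈ B → Sum.inl q ∈ B → fp p = fp q → p = q := by
    intro p q hp hq he
    have := pk.injF ((hptB p).mpr hp) ((hptB q).mpr hq)
      (show Sum.map fp fl (Sum.inl p) = Sum.map fp fl (Sum.inl q) by simp [he])
    exact Sum.inl_injective this
  have hflinj : ∀ {l l' : L}, Sum.inr l ∈ B' → Sum.inr l' ∈ B' → fl l = fl l' → l = l' := by
    intro l l' hl hl' he
    have := pk.injF hl hl'
      (show Sum.map fp fl (Sum.inr l) = Sum.map fp fl (Sum.inr l') by simp [he])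
    exact Sum.inr_injective this
  have hfpF : ∀ {p : P}, Sum.inl p ∈ B → Sum.inl (fp p) ∈ F :=
    fun {p} hp => ⟨Sum.inl p, (hptB p).mpr hp, rfl⟩
  have hflF : ∀ {l : L}, Sum.inr l ∈ B' → Sum.inr (fl l) ∈ F :=
    fun {l} hl => ⟨Sum.inr l, hl, rfl⟩
  have hFD : F ⊆ D := pk.mapsF.image_subset
  have hGD : G ⊆ D := pk.mapsG.image_subset
  have hfpD : ∀ {p : P}, Sum.inl p ∈ B → Sum.inl (fp p) ∈ D := fun {p} hp => hFD (hfpF hp)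
  have hflD : ∀ {l : L}, Sum.inr l ∈ B' → Sum.inr (fl l) ∈ D := fun {l} hl => hFD (hflF hl)
  have hDneL : ∀ y : L ⊕ L, Sum.inr y ∈ D → y ≠ Sum.inl bl := by
    intro y hy hyeq
    subst hyeq
    rcases (pk.union ▸ hy) with hF | hG
    · obtain ⟨l₀, hl₀, hfl₀⟩ := mem_map_inr.mp hF
      rcases pk.inv (Sum.inr l₀) hl₀ with h | h
      · simp only [Sum.map_inr] at h
        have hfll : fl l₀ = Sum.inl l₀ := Sum.inr_injective h
        rw [hfll] at hfl₀
        obtain rfl : l₀ = bl := Sum.inl_injective hfl₀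
        exact ((hlineB l₀).mp hl₀).2 rfl
      · rw [show Sum.map fp fl (Sum.inr l₀) = Sum.inr (fl l₀) from rfl] at h
        obtain ⟨c₀, _, hc₀⟩ := mem_map_inr.mp h
        rw [hfl₀] at hc₀
        exact absurd hc₀ (by simp)
    · obtain ⟨c₀, _, hc₀⟩ := mem_map_inr.mp hG
      exact absurd hc₀ (by simp)
  -- the parallel class of bl inside D
  set K : Set (L ⊕ L) := {y | Sum.inr y ∈ D ∧
    ∃ m : L, Sum.inr m ∈ B ∧ m ≠ bl ∧ ParB bl m ∧ ParD y (fl m)} with hKdef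
  have hKD : ∀ {y : L ⊕ L}, y ∈ K → Sum.inr y ∈ D := fun hy => hy.1
  have hKfl : ∀ n : L, Sum.inr n ∈ B → n ≠ bl → (fl n ∈ K ↔ ParB bl n) := by
    intro n hn hne
    constructor
    · rintro ⟨-, m, hm, hmne, hPbm, hpar⟩
      have hnm : ParB n m := (pk.embParB n m ((hlineB n).mpr ⟨hn, hne⟩)
        ((hlineB m).mpr ⟨hm, hmne⟩)).mp hpar
      exact hBpartial.2.2.1 bl m n hb hm hn hPbm (hBpartial.2.1 n m hn hm hnm)
    · intro h
      exact ⟨hflD ((hlineB n).mpr ⟨hn, hne⟩), n, hn, hne, h,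
        d1 _ (hflD ((hlineB n).mpr ⟨hn, hne⟩))⟩
  have hKclosed : ∀ {y y' : L ⊕ L}, y ∈ K → Sum.inr y' ∈ D → ParD y y' → y' ∈ K := by
    rintro y y' ⟨hyD, m, hm, hmne, hPbm, hpar⟩ hy'D hp
    exact ⟨hy'D, m, hm, hmne, hPbm,
      d3 y' y (fl m) hy'D hyD (hflD ((hlineB m).mpr ⟨hm, hmne⟩)) (d2 y y' hyD hy'D hp) hpar⟩
  have hKpar : ∀ {y y' : L ⊕ L}, y ∈ K → y' ∈ K → ParD y y' := by
    rintro y y' ⟨hyD, m, hm, hmne, hPbm, hpar⟩ ⟨hy'D, m', hm', hmne', hPbm', hpar'⟩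
    have hmm' : ParB m m' := hBpartial.2.2.1 m bl m' hm hb hm'
      (hBpartial.2.1 bl m hb hm hPbm) hPbm'
    have hDmm' : ParD (fl m) (fl m') := (pk.embParB m m' ((hlineB m).mpr ⟨hm, hmne⟩)
      ((hlineB m').mpr ⟨hm', hmne'⟩)).mpr hmm'
    have hmD := hflD ((hlineB m).mpr ⟨hm, hmne⟩)
    have hm'D := hflD ((hlineB m').mpr ⟨hm', hmne'⟩)
    exact d3 y (fl m) y' hyD hmD hy'D hpar
      (d3 (fl m) (fl m') y' hmD hm'D hy'D hDmm' (d2 y' (fl m') hy'D hm'D hpar'))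
  -- shared identification construction
  have hident : ∀ e : L ⊕ L, Sum.inr e ∈ D → Sum.inr e ∉ F →
      (∀ p : P, Sum.inl p ∈ B → (ID (fp p) e ↔ IB p bl)) →
      (∀ n : L, Sum.inr n ∈ B → n ≠ bl → (ParD e (fl n) ↔ ParB bl n)) →
      (∀ S : Set ((P⊕P) ⊕ (L⊕L)), S ⊆ D \ insert (Sum.inr e) F → S.Finite →
        ∀ x ∈ S, Hyperfree ID ParD (F ∪ S) x →
          Hyperfree ID ParD (insert (Sum.inr e) F ∪ S) (Sum.inr e) →
          Hyperfree ID ParD (insert (Sum.inr e) F ∪ S) x) →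
      ∃ ID' ParD' D' fp' fl', Pack IB IC ParB ParC B C ID' ParD' D' fp' fl' := by
    intro e heD heF hinc hpar hinter
    set fl' : L → L ⊕ L := fun x => if x = bl then e else fl x with hfl'def
    have hfl'bl : fl' bl = e := if_pos rfl
    have hfl'eq : ∀ l : L, l ≠ bl → fl' l = fl l := fun l hl => if_neg hl
    have hfeq : ∀ x ∈ B', Sum.map fp fl' x = Sum.map fp fl x := by
      rintro (p | l) hx
      · rfl
      · simp [hfl'eq l ((hlineB l).mp hx).2]
    have hFeq : Sum.map fp fl' '' B' = F := Set.image_congr hfeq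
    have hmapb : Sum.map fp fl' (Sum.inr bl) = Sum.inr e := by simp [hfl'bl]
    have himB : Sum.map fp fl' '' B = insert (Sum.inr e) F := by
      rw [← hBins, Set.image_insert_eq, hFeq, hmapb]
    have heG : Sum.inr e ∈ G := (pk.union ▸ heD).resolve_left heF
    refine ⟨ID, ParD, D, fp, fl', ?_⟩
    refine ⟨pk.fin, pk.pa, pk.open_, ?_, pk.mapsG, ?_, ?_, ?_, pk.embIC, pk.embParC,
      ?_, ?_, pk.openG, ?_, ?_⟩
    · -- mapsF
      intro x hx
      rcases eq_or_ne x (Sum.inr bl) with rfl | hxb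
      · rw [hmapb]; exact heD
      · rw [hfeq x ⟨hx, by simpa using hxb⟩]
        exact pk.mapsF ⟨hx, by simpa using hxb⟩
    · -- injF
      intro x hx y hy he
      rcases eq_or_ne x (Sum.inr bl) with rfl | hxb
      · rcases eq_or_ne y (Sum.inr bl) with rfl | hyb
        · rfl
        · have hyB' : y ∈ B' := ⟨hy, by simpa using hyb⟩
          rw [hmapb, hfeq y hyB'] at he
          exact absurd (he ▸ ⟨y, hyB', rfl⟩ : Sum.inr e ∈ F) heF
      · rcases eq_or_ne y (Sum.inr bl) with rfl | hyb
        · have hxB' : x ∈ B' := ⟨hx, by simpa using hxb⟩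
          rw [hmapb, hfeq x hxB'] at he
          exact absurd (he ▸ ⟨x, hxB', rfl⟩ : Sum.inr e ∈ F) heF
        · have hxB' : x ∈ B' := ⟨hx, by simpa using hxb⟩
          have hyB' : y ∈ B' := ⟨hy, by simpa using hyb⟩
          rw [hfeq x hxB', hfeq y hyB'] at he
          exact pk.injF hxB' hyB' he
    · -- embIB
      intro p l hp hl
      by_cases hlb : l = bl
      · rw [hlb, hfl'bl]
        rw [hlb] at hl
        exact hinc p hp
      · rw [hfl'eq l hlb]
        exact pk.embIB p l ((hptB p).mpr hp) ((hlineB l).mpr ⟨hl, hlb⟩)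
    · -- embParB
      intro l l' hl hl'
      by_cases hlb : l = bl
      · by_cases hl'b : l' = bl
        · rw [hlb, hl'b, hfl'bl]
          exact iff_of_true (d1 e heD) (hBpartial.1 bl hb)
        · rw [hlb, hfl'bl, hfl'eq l' hl'b]
          exact hpar l' hl' hl'b
      · by_cases hl'b : l' = bl
        · rw [hl'b, hfl'bl, hfl'eq l hlb]
          constructor
          · intro h
            exact hBpartial.2.1 bl l hb hl
              ((hpar l hl hlb).mp (d2 (fl l) e (hflD ((hlineB l).mpr ⟨hl, hlb⟩)) heD h))
          · intro h
            exact d2 e (fl l) heD (hflD ((hlineB l).mpr ⟨hl, hlb⟩))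
              ((hpar l hl hlb).mpr (hBpartial.2.1 l bl hl hb h))
        · rw [hfl'eq l hlb, hfl'eq l' hl'b]
          exact pk.embParB l l' ((hlineB l).mpr ⟨hl, hlb⟩) ((hlineB l').mpr ⟨hl', hl'b⟩)
    · -- agree
      intro x hx
      have hxB' : x ∈ B' ∩ C := ⟨⟨hx.1, by
        simp only [Set.mem_singleton_iff]
        rintro rfl
        exact hbC hx.2⟩, hx.2⟩
      rw [hfeq x hxB'.1]
      exact pk.agree x hxB'
    · -- openF
      rw [himB]
      exact openOver_insert pk.openF heD heF hinter
    · -- union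
      rw [himB, Set.insert_union, ← pk.union]
      exact (Set.insert_eq_self.mpr heD).symm
    · -- inv
      intro x hx
      rcases eq_or_ne x (Sum.inr bl) with rfl | hxb
      · right
        rw [hmapb]
        exact heG
      · have hxB' : x ∈ B' := ⟨hx, by simpa using hxb⟩
        rw [hfeq x hxB']
        exact pk.inv x hxB'
  by_cases hc : (∃ (e : L ⊕ L) (p₀ : P), Sum.inr e ∈ D ∧ Sum.inl p₀ ∈ B ∧ IB p₀ bl ∧
      ID (fp p₀) e ∧ e ∈ K) ∨
    (∃ (e : L ⊕ L) (p₀ q₀ : P), Sum.inr e ∈ D ∧ p₀ ≠ q₀ ∧ Sum.inl p₀ ∈ B ∧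
      Sum.inl q₀ ∈ B ∧ IB p₀ bl ∧ IB q₀ bl ∧ ID (fp p₀) e ∧ ID (fp q₀) e)
  · rcases hc with ⟨e, p₀, heD, hp₀, hIBp₀, hIDp₀, heK⟩ |
      ⟨e, p₀, q₀, heD, hpq, hp₀, hq₀, hIBp₀, hIBq₀, hIDp₀, hIDq₀⟩
    · -- Conflict of the first kind: e through fp p₀ parallel to the class of bl
      obtain ⟨-, m, hm, hmne, hPbm, hparm⟩ := heK
      have hmB' : Sum.inr m ∈ B' := (hlineB m).mpr ⟨hm, hmne⟩
      have hble1 : (pointsOn IB B bl).encard ≤ 1 := by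
        rcases hfb with h | ⟨-, hnp⟩
        · exact h
        · exact absurd hPbm (hnp m hm hmne)
      have heF : Sum.inr e ∉ F := by
        intro hmem
        obtain ⟨n, hn, hfln⟩ := mem_map_inr.mp hmem
        have hnB : Sum.inr n ∈ B := ((hlineB n).mp hn).1
        have hnbl : n ≠ bl := ((hlineB n).mp hn).2
        have hnm : ParB n m := (pk.embParB n m hn hmB').mp (by rw [hfln]; exact hparm)
        have hbln : ParB bl n := hBpartial.2.2.1 bl m n hb hm hnB hPbm
          (hBpartial.2.1 n m hnB hm hnm)
        have hIBn : IB p₀ n := (pk.embIB p₀ n ((hptB p₀).mpr hp₀) hn).mp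
          (by rw [hfln]; exact hIDp₀)
        exact hnbl (hBpartial.2.2.2.2.2 p₀ hp₀ bl hb n bl hn.1 hb hIBn
          (hBpartial.2.1 bl n hb hnB hbln) hIBp₀ (hBpartial.1 bl hb))
      have hesing : Hyperfree ID ParD (F ∪ {Sum.inr e}) (Sum.inr e) := by
        obtain ⟨c, hcS, hc⟩ := pk.openF {Sum.inr e}
          (by rw [Set.singleton_subset_iff]; exact ⟨heD, heF⟩) (Set.finite_singleton _)
          (Set.singleton_nonempty _)
        obtain rfl : c = Sum.inr e := hcS
        exact hc
      have hinc : ∀ p : P, Sum.inl p ∈ B → (ID (fp p) e ↔ IB p bl) := by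
        intro p hp
        constructor
        · intro hIDe
          by_contra hnI
          have hppo : p ≠ p₀ := fun h => hnI (h ▸ hIBp₀)
          rcases hesing with h | ⟨-, hnp⟩
          · exact hppo (hfpinj hp hp₀ (encard_two_elems h
              ⟨Or.inl (hfpF hp), hIDe⟩ ⟨Or.inl (hfpF hp₀), hIDp₀⟩))
          · exact hnp (fl m) (Or.inl (hflF hmB')) (fun h => heF (h ▸ hflF hmB')) hparm
        · intro hI
          have : p = p₀ := encard_two_elems hble1 ⟨hp, hI⟩ ⟨hp₀, hIBp₀⟩
          exact this ▸ hIDp₀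
      have heK' : e ∈ K := ⟨heD, m, hm, hmne, hPbm, hparm⟩
      have hpar : ∀ n : L, Sum.inr n ∈ B → n ≠ bl → (ParD e (fl n) ↔ ParB bl n) := by
        intro n hn hnbl
        constructor
        · intro h
          exact (hKfl n hn hnbl).mp (hKclosed heK' (hflD ((hlineB n).mpr ⟨hn, hnbl⟩)) h)
        · intro h
          exact hKpar heK' ((hKfl n hn hnbl).mpr h)
      refine hident e heD heF hinc hpar ?_
      intro S hS hSfin x hxS hx hhe
      rw [Set.insert_union] at hhe ⊢
      refine hyperfree_insert_line hx ?_ ?_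
      · rintro ep rfl hIDep
        rcases hhe with h | ⟨-, hnp⟩
        · have heq : fp p₀ = ep := encard_two_elems h
            ⟨Set.mem_insert_iff.mpr (Or.inr (Or.inl (hfpF hp₀))), hIDp₀⟩
            ⟨Set.mem_insert_iff.mpr (Or.inr (Or.inr hxS)), hIDep⟩
          exact (hS hxS).2 (Set.mem_insert_iff.mpr (Or.inr (heq ▸ hfpF hp₀)))
        · exact hnp (fl m) (Set.mem_insert_iff.mpr (Or.inr (Or.inl (hflF hmB'))))
            (fun h => heF (h ▸ hflF hmB')) hparm
      · rintro el rfl hneel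
        rcases hx with h | ⟨h2x, hnpx⟩
        · exact Or.inr h
        · refine Or.inl fun hpe => ?_
          have helD : Sum.inr el ∈ D := (hS hxS).1
          have : ParD el (fl m) := d3 el e (fl m) helD heD (hflD hmB') hpe hparm
          exact hnpx (fl m) (Or.inl (hflF hmB'))
            (fun h => (hS hxS).2 (Set.mem_insert_iff.mpr (Or.inr (h ▸ hflF hmB')))) this
    · -- Conflict of the second kind: e through two points of bl
      have hfpne : fp p₀ ≠ fp q₀ := fun h => hpq (hfpinj hp₀ hq₀ h)
      have hPb2 : (pointsOn IB B bl).encard = 2 ∧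
          ∀ l' : L, Sum.inr l' ∈ B → l' ≠ bl → ¬ ParB bl l' := by
        rcases hfb with h | h
        · exact absurd (encard_two_elems h ⟨hp₀, hIBp₀⟩ ⟨hq₀, hIBq₀⟩) hpq
        · exact h
      have heF : Sum.inr e ∉ F := by
        intro hmem
        obtain ⟨n, hn, hfln⟩ := mem_map_inr.mp hmem
        have hIBn : IB p₀ n := (pk.embIB p₀ n ((hptB p₀).mpr hp₀) hn).mp
          (by rw [hfln]; exact hIDp₀)
        have hIBn' : IB q₀ n := (pk.embIB q₀ n ((hptB q₀).mpr hq₀) hn).mp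
          (by rw [hfln]; exact hIDq₀)
        exact ((hlineB n).mp hn).2
          (hBpartial.2.2.2.1 p₀ q₀ hpq hp₀ hq₀ n bl hn.1 hb hIBn hIBn' hIBp₀ hIBq₀)
      have hesing : Hyperfree ID ParD (F ∪ {Sum.inr e}) (Sum.inr e) := by
        obtain ⟨c, hcS, hc⟩ := pk.openF {Sum.inr e}
          (by rw [Set.singleton_subset_iff]; exact ⟨heD, heF⟩) (Set.finite_singleton _)
          (Set.singleton_nonempty _)
        obtain rfl : c = Sum.inr e := hcS
        exact hc
      have hsing2 : (pointsOn ID (F ∪ {Sum.inr e}) e).encard = 2 ∧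
          ∀ l', Sum.inr l' ∈ F ∪ {Sum.inr e} → l' ≠ e → ¬ ParD e l' := by
        rcases hesing with h | h
        · exact absurd (encard_two_elems h ⟨Or.inl (hfpF hp₀), hIDp₀⟩
            ⟨Or.inl (hfpF hq₀), hIDq₀⟩) hfpne
        · exact h
      have hinc : ∀ p : P, Sum.inl p ∈ B → (ID (fp p) e ↔ IB p bl) := by
        intro p hp
        constructor
        · intro hIDe
          by_contra hnI
          have hp1 : p ≠ p₀ := fun h => hnI (h ▸ hIBp₀)
          have hp2 : p ≠ q₀ := fun h => hnI (h ▸ hIBq₀)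
          exact not_encard_le_two (s := pointsOn ID (F ∪ {Sum.inr e}) e)
            ⟨Or.inl (hfpF hp), hIDe⟩ ⟨Or.inl (hfpF hp₀), hIDp₀⟩
            ⟨Or.inl (hfpF hq₀), hIDq₀⟩
            (fun h => hp1 (hfpinj hp hp₀ h)) (fun h => hp2 (hfpinj hp hq₀ h)) hfpne
            hsing2.1.le
        · intro hI
          by_cases h1 : p = p₀
          · exact h1 ▸ hIDp₀
          by_cases h2 : p = q₀
          · exact h2 ▸ hIDq₀
          exact absurd (hPb2.1.le) (not_encard_le_two (s := pointsOn IB B bl)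
            ⟨hp, hI⟩ ⟨hp₀, hIBp₀⟩ ⟨hq₀, hIBq₀⟩ h1 h2 hpq)
      have hpar : ∀ n : L, Sum.inr n ∈ B → n ≠ bl → (ParD e (fl n) ↔ ParB bl n) := by
        intro n hn hnbl
        constructor
        · intro h
          exact absurd h (hsing2.2 (fl n) (Or.inl (hflF ((hlineB n).mpr ⟨hn, hnbl⟩)))
            (fun hh => heF (hh ▸ hflF ((hlineB n).mpr ⟨hn, hnbl⟩))))
        · intro h
          exact absurd h (hPb2.2 n hn hnbl)
      refine hident e heD heF hinc hpar ?_
      intro S hS hSfin x hxS hx hhe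
      rw [Set.insert_union] at hhe ⊢
      have hhe2 : (pointsOn ID (insert (Sum.inr e) (F ∪ S)) e).encard = 2 ∧
          ∀ l', Sum.inr l' ∈ insert (Sum.inr e) (F ∪ S) → l' ≠ e → ¬ ParD e l' := by
        rcases hhe with h | h
        · exact absurd (encard_two_elems h
            ⟨Set.mem_insert_iff.mpr (Or.inr (Or.inl (hfpF hp₀))), hIDp₀⟩
            ⟨Set.mem_insert_iff.mpr (Or.inr (Or.inl (hfpF hq₀))), hIDq₀⟩) hfpne
        · exact h
      refine hyperfree_insert_line hx ?_ ?_
      · rintro ep rfl hIDep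
        have hepF : Sum.inl ep ∉ F := fun h =>
          (hS hxS).2 (Set.mem_insert_iff.mpr (Or.inr h))
        exact not_encard_le_two (s := pointsOn ID (insert (Sum.inr e) (F ∪ S)) e)
          ⟨Set.mem_insert_iff.mpr (Or.inr (Or.inr hxS)), hIDep⟩
          ⟨Set.mem_insert_iff.mpr (Or.inr (Or.inl (hfpF hp₀))), hIDp₀⟩
          ⟨Set.mem_insert_iff.mpr (Or.inr (Or.inl (hfpF hq₀))), hIDq₀⟩
          (fun h => hepF (h ▸ hfpF hp₀)) (fun h => hepF (h ▸ hfpF hq₀)) hfpne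
          hhe2.1.le
      · rintro el rfl hneel
        rcases hx with h | ⟨h2x, hnpx⟩
        · exact Or.inr h
        · refine Or.inl fun hpe => ?_
          have helD : Sum.inr el ∈ D := (hS hxS).1
          exact hhe2.2 el (Set.mem_insert_iff.mpr (Or.inr (Or.inr hxS)))
            (fun h => hneel h.symm) (d2 el e helD heD hpe)
  · -- fresh case: add a brand new line
    have hnc1 : ∀ (e : L ⊕ L) (p₀ : P), Sum.inr e ∈ D → Sum.inl p₀ ∈ B → IB p₀ bl →
        ID (fp p₀) e → e ∈ K → False :=
      fun e p₀ h1 h2 h3 h4 h5 => hc (Or.inl ⟨e, p₀, h1, h2, h3, h4, h5⟩)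
    have hnc2 : ∀ (e : L ⊕ L) (p₀ q₀ : P), Sum.inr e ∈ D → p₀ ≠ q₀ → Sum.inl p₀ ∈ B →
        Sum.inl q₀ ∈ B → IB p₀ bl → IB q₀ bl → ID (fp p₀) e → ID (fp q₀) e → False :=
      fun e p₀ q₀ h1 h2 h3 h4 h5 h6 h7 h8 =>
        hc (Or.inr ⟨e, p₀, q₀, h1, h2, h3, h4, h5, h6, h7, h8⟩)
    set dl : L ⊕ L := Sum.inl bl with hdldef
    set fl' : L → L ⊕ L := fun x => if x = bl then dl else fl x with hfl'def
    set ID' : (P ⊕ P) → (L ⊕ L) → Prop :=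
      fun x y => (y = dl ∧ ∃ p : P, Sum.inl p ∈ B ∧ IB p bl ∧ x = fp p) ∨
        (y ≠ dl ∧ ID x y) with hID'def
    set Par' : (L ⊕ L) → (L ⊕ L) → Prop :=
      fun x y => (x = dl ∧ y = dl) ∨ (x = dl ∧ y ≠ dl ∧ y ∈ K) ∨
        (y = dl ∧ x ≠ dl ∧ x ∈ K) ∨ (x ≠ dl ∧ y ≠ dl ∧ ParD x y) with hPar'def
    set D' : Set ((P⊕P) ⊕ (L⊕L)) := insert (Sum.inr dl) D with hD'def
    have hfresh : Sum.inr dl ∉ D := fun h => hDneL dl h rfl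
    have hKne : ∀ {y : L ⊕ L}, y ∈ K → y ≠ dl := fun {y} hy => hDneL y hy.1
    have hID'ne : ∀ (x : P ⊕ P) (y : L ⊕ L), y ≠ dl → (ID' x y ↔ ID x y) := by
      intro x y hy
      constructor
      · rintro (⟨heq, -⟩ | ⟨-, h⟩)
        · exact absurd heq hy
        · exact h
      · exact fun h => Or.inr ⟨hy, h⟩
    have hID'old : ∀ (x : P ⊕ P) (y : L ⊕ L), Sum.inr y ∈ D → (ID' x y ↔ ID x y) :=
      fun x y hy => hID'ne x y (hDneL y hy)
    have hID'new : ∀ x : P ⊕ P, ID' x dl ↔ ∃ p : P, Sum.inl p ∈ B ∧ IB p bl ∧ x = fp p := by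
      intro x
      constructor
      · rintro (⟨-, h⟩ | ⟨hne, -⟩)
        · exact h
        · exact absurd rfl hne
      · exact fun h => Or.inl ⟨rfl, h⟩
    have hPar'ne : ∀ (x y : L ⊕ L), x ≠ dl → y ≠ dl → (Par' x y ↔ ParD x y) := by
      intro x y hx hy
      constructor
      · rintro (⟨h, -⟩ | ⟨h, -⟩ | ⟨h, -⟩ | ⟨-, -, h⟩)
        · exact absurd h hx
        · exact absurd h hx
        · exact absurd h hy
        · exact h
      · exact fun h => Or.inr (Or.inr (Or.inr ⟨hx, hy, h⟩))
    have hPar'l : ∀ y : L ⊕ L, y ≠ dl → (Par' dl y ↔ y ∈ K) := by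
      intro y hy
      constructor
      · rintro (⟨-, h⟩ | ⟨-, -, h⟩ | ⟨h, -⟩ | ⟨h, -⟩)
        · exact absurd h hy
        · exact h
        · exact absurd h hy
        · exact absurd rfl h
      · exact fun h => Or.inr (Or.inl ⟨rfl, hy, h⟩)
    have hPar'r : ∀ x : L ⊕ L, x ≠ dl → (Par' x dl ↔ x ∈ K) := by
      intro x hx
      constructor
      · rintro (⟨h, -⟩ | ⟨h, -⟩ | ⟨-, -, h⟩ | ⟨-, h, -⟩)
        · exact absurd h hx
        · exact absurd h hx
        · exact h
        · exact absurd rfl h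
      · exact fun h => Or.inr (Or.inr (Or.inl ⟨rfl, hx, h⟩))
    have hPar'll : Par' dl dl := Or.inl ⟨rfl, rfl⟩
    have hptD' : ∀ x : P ⊕ P, Sum.inl x ∈ D' ↔ Sum.inl x ∈ D := fun x =>
      mem_insert_inr_iff_point
    have hlineD' : ∀ y : L ⊕ L, Sum.inr y ∈ D' → y = dl ∨ Sum.inr y ∈ D := by
      intro y hy
      rcases Set.mem_insert_iff.mp hy with h | h
      · exact Or.inl (Sum.inr_injective h)
      · exact Or.inr h
    have hfl'bl : fl' bl = dl := if_pos rfl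
    have hfl'eq : ∀ l : L, l ≠ bl → fl' l = fl l := fun l hl => if_neg hl
    have hfeq : ∀ x ∈ B', Sum.map fp fl' x = Sum.map fp fl x := by
      rintro (p | l) hx
      · rfl
      · simp [hfl'eq l ((hlineB l).mp hx).2]
    have hFeq : Sum.map fp fl' '' B' = F := Set.image_congr hfeq
    have hmapb : Sum.map fp fl' (Sum.inr bl) = Sum.inr dl := by simp [hfl'bl]
    have himB : Sum.map fp fl' '' B = insert (Sum.inr dl) F := by
      rw [← hBins, Set.image_insert_eq, hFeq, hmapb]
    -- the new line is hyperfree in any subset of the new plane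
    have hgen : ∀ X : Set ((P⊕P) ⊕ (L⊕L)),
        pointsOn ID' X dl ⊆ fp '' pointsOn IB B bl := by
      rintro X x ⟨hx, hIx⟩
      obtain ⟨p, hp, hIp, rfl⟩ := (hID'new x).mp hIx
      exact ⟨p, ⟨hp, hIp⟩, rfl⟩
    have hdlfree : ∀ X : Set ((P⊕P) ⊕ (L⊕L)), Hyperfree ID' Par' X (Sum.inr dl) := by
      intro X
      have hle : (pointsOn ID' X dl).encard ≤ 2 := by
        refine le_trans (Set.encard_le_encard (hgen X)) (le_trans (Set.encard_image_le _ _) ?_)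
        rcases hfb with h | ⟨h, -⟩
        · exact le_trans h (by norm_num)
        · exact h.le
      rcases encard_le_two_cases hle with h | h
      · exact Or.inl h
      · refine Or.inr ⟨h, fun l' hl' hne hP => ?_⟩
        have hl'K : l' ∈ K := (hPar'l l' hne).mp hP
        obtain ⟨-, m, hm, hmne, hPbm, -⟩ := hl'K
        rcases hfb with hh | ⟨-, hnp⟩
        · -- bl has ≤ 1 point in B, but pointsOn ID' X dl has 2 elements
          have : (fp '' pointsOn IB B bl).encard ≤ 1 :=
            le_trans (Set.encard_image_le _ _) hh
          have h2 := le_trans (Set.encard_le_encard (hgen X)) this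
          rw [h] at h2
          norm_num at h2
        · exact hnp m hm hmne hPbm
    refine ⟨ID', Par', D', fp, fl', ?_⟩
    refine ⟨pk.fin.insert _, ?_, ?_, ?_, fun x hx => Set.mem_insert_iff.mpr
      (Or.inr (pk.mapsG hx)), ?_, ?_, ?_, ?_, ?_, ?_, ?_, ?_, ?_, ?_⟩
    · -- IsPartialAffine
      refine ⟨?_, ?_, ?_, ?_, ?_, ?_⟩
      · -- refl
        intro l hl
        rcases hlineD' l hl with rfl | hlD
        · exact hPar'll
        · exact (hPar'ne l l (hDneL l hlD) (hDneL l hlD)).mpr (d1 l hlD)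
      · -- sym
        intro l l' hl hl' h
        by_cases hld : l = dl
        · by_cases hl'd : l' = dl
          · rw [hld, hl'd]; exact hPar'll
          · rw [hld] at h
            rw [hld]
            exact (hPar'r l' hl'd).mpr ((hPar'l l' hl'd).mp h)
        · by_cases hl'd : l' = dl
          · rw [hl'd] at h
            rw [hl'd]
            exact (hPar'l l hld).mpr ((hPar'r l hld).mp h)
          · have hlD := (hlineD' l hl).resolve_left hld
            have hl'D := (hlineD' l' hl').resolve_left hl'd
            exact (hPar'ne l' l hl'd hld).mpr
              (d2 l l' hlD hl'D ((hPar'ne l l' hld hl'd).mp h))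
      · -- trans
        intro l l' l'' hl hl' hl'' h1 h2
        by_cases hld : l = dl
        · by_cases hl''d : l'' = dl
          · rw [hld, hl''d]; exact hPar'll
          · by_cases hl'd : l' = dl
            · rw [hl'd] at h2
              rw [hld]
              exact h2
            · rw [hld] at h1
              have hl'K : l' ∈ K := (hPar'l l' hl'd).mp h1
              have hl''D := (hlineD' l'' hl'').resolve_left hl''d
              rw [hld]
              exact (hPar'l l'' hl''d).mpr (hKclosed hl'K hl''D
                ((hPar'ne l' l'' hl'd hl''d).mp h2))
        · by_cases hl''d : l'' = dl
          · by_cases hl'd : l' = dl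
            · rw [hl'd] at h1
              rw [hl''d]
              exact h1
            · rw [hl''d] at h2 ⊢
              have hl'K : l' ∈ K := (hPar'r l' hl'd).mp h2
              have hlD := (hlineD' l hl).resolve_left hld
              exact (hPar'r l hld).mpr (hKclosed hl'K hlD
                (d2 l l' hlD (hKD hl'K) ((hPar'ne l l' hld hl'd).mp h1)))
          · by_cases hl'd : l' = dl
            · rw [hl'd] at h1 h2
              have hlK : l ∈ K := (hPar'r l hld).mp h1
              have hl''K : l'' ∈ K := (hPar'l l'' hl''d).mp h2
              exact (hPar'ne l l'' hld hl''d).mpr (hKpar hlK hl''K)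
            · have hlD := (hlineD' l hl).resolve_left hld
              have hl'D := (hlineD' l' hl').resolve_left hl'd
              have hl''D := (hlineD' l'' hl'').resolve_left hl''d
              exact (hPar'ne l l'' hld hl''d).mpr (d3 l l' l'' hlD hl'D hl''D
                ((hPar'ne l l' hld hl'd).mp h1) ((hPar'ne l' l'' hl'd hl''d).mp h2))
      · -- ax4
        intro p q hpq hp hq l l' hl hl' h1 h2 h3 h4
        rw [hptD'] at hp hq
        by_cases hld : l = dl
        · by_cases hl'd : l' = dl
          · rw [hld, hl'd]
          · rw [hld] at h1 h2
            obtain ⟨p₁, hp₁, hI₁, rfl⟩ := (hID'new p).mp h1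
            obtain ⟨p₂, hp₂, hI₂, rfl⟩ := (hID'new q).mp h2
            have hne : p₁ ≠ p₂ := fun h => hpq (by rw [h])
            have hl'D := (hlineD' l' hl').resolve_left hl'd
            exact absurd (hnc2 l' p₁ p₂ hl'D hne hp₁ hp₂ hI₁ hI₂
              ((hID'ne _ _ hl'd).mp h3) ((hID'ne _ _ hl'd).mp h4)) id
        · by_cases hl'd : l' = dl
          · rw [hl'd] at h3 h4
            obtain ⟨p₁, hp₁, hI₁, rfl⟩ := (hID'new p).mp h3
            obtain ⟨p₂, hp₂, hI₂, rfl⟩ := (hID'new q).mp h4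
            have hne : p₁ ≠ p₂ := fun h => hpq (by rw [h])
            have hlD := (hlineD' l hl).resolve_left hld
            exact absurd (hnc2 l p₁ p₂ hlD hne hp₁ hp₂ hI₁ hI₂
              ((hID'ne _ _ hld).mp h1) ((hID'ne _ _ hld).mp h2)) id
          · have hlD := (hlineD' l hl).resolve_left hld
            have hl'D := (hlineD' l' hl').resolve_left hl'd
            exact d4 p q hpq hp hq l l' hlD hl'D ((hID'ne _ _ hld).mp h1)
              ((hID'ne _ _ hld).mp h2) ((hID'ne _ _ hl'd).mp h3)
              ((hID'ne _ _ hl'd).mp h4)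
      · -- ax5
        intro l l' hnp hl hl' p q hp hq h1 h2 h3 h4
        rw [hptD'] at hp hq
        by_cases hld : l = dl
        · by_cases hl'd : l' = dl
          · rw [hld, hl'd] at hnp
            exact absurd hPar'll hnp
          · rw [hld] at h1 h3
            obtain ⟨p₁, hp₁, hI₁, rfl⟩ := (hID'new p).mp h1
            obtain ⟨p₂, hp₂, hI₂, rfl⟩ := (hID'new q).mp h3
            by_cases hne : p₁ = p₂
            · rw [hne]
            · have hl'D := (hlineD' l' hl').resolve_left hl'd
              exact absurd (hnc2 l' p₁ p₂ hl'D hne hp₁ hp₂ hI₁ hI₂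
                ((hID'ne _ _ hl'd).mp h2) ((hID'ne _ _ hl'd).mp h4)) id
        · by_cases hl'd : l' = dl
          · rw [hl'd] at h2 h4
            obtain ⟨p₁, hp₁, hI₁, rfl⟩ := (hID'new p).mp h2
            obtain ⟨p₂, hp₂, hI₂, rfl⟩ := (hID'new q).mp h4
            by_cases hne : p₁ = p₂
            · rw [hne]
            · have hlD := (hlineD' l hl).resolve_left hld
              exact absurd (hnc2 l p₁ p₂ hlD hne hp₁ hp₂ hI₁ hI₂
                ((hID'ne _ _ hld).mp h1) ((hID'ne _ _ hld).mp h3)) id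
          · have hlD := (hlineD' l hl).resolve_left hld
            have hl'D := (hlineD' l' hl').resolve_left hl'd
            have hnp' : ¬ ParD l l' := fun h => hnp ((hPar'ne l l' hld hl'd).mpr h)
            exact d5 l l' hnp' hlD hl'D p q hp hq ((hID'ne _ _ hld).mp h1)
              ((hID'ne _ _ hl'd).mp h2) ((hID'ne _ _ hld).mp h3)
              ((hID'ne _ _ hl'd).mp h4)
      · -- ax6
        intro p hp l hl l' l'' hl' hl'' h1 hp1 h2 hp2
        have hpD : Sum.inl p ∈ D := (hptD' p).mp hp
        by_cases h1d : l' = dl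
        · by_cases h2d : l'' = dl
          · rw [h1d, h2d]
          · rw [h1d] at h1 hp1
            obtain ⟨p₁, hp₁, hI₁, rfl⟩ := (hID'new p).mp h1
            have hl''D := (hlineD' l'' hl'').resolve_left h2d
            have h2' : ID (fp p₁) l'' := (hID'ne _ _ h2d).mp h2
            have hl''K : l'' ∈ K := by
              by_cases hld : l = dl
              · rw [hld] at hp2
                exact (hPar'r l'' h2d).mp hp2
              · have hlK : l ∈ K := (hPar'l l hld).mp hp1
                exact hKclosed hlK hl''D (d2 l'' l hl''D (hKD hlK)
                  ((hPar'ne l'' l h2d hld).mp hp2))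
            exact absurd (hnc1 l'' p₁ hl''D hp₁ hI₁ h2' hl''K) id
        · by_cases h2d : l'' = dl
          · rw [h2d] at h2 hp2
            obtain ⟨p₂, hp₂, hI₂, rfl⟩ := (hID'new p).mp h2
            have hl'D := (hlineD' l' hl').resolve_left h1d
            have h1' : ID (fp p₂) l' := (hID'ne _ _ h1d).mp h1
            have hl'K : l' ∈ K := by
              by_cases hld : l = dl
              · rw [hld] at hp1
                exact (hPar'r l' h1d).mp hp1
              · have hlK : l ∈ K := (hPar'l l hld).mp hp2
                exact hKclosed hlK hl'D (d2 l' l hl'D (hKD hlK)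
                  ((hPar'ne l' l h1d hld).mp hp1))
            exact absurd (hnc1 l' p₂ hl'D hp₂ hI₂ h1' hl'K) id
          · have hl'D := (hlineD' l' hl').resolve_left h1d
            have hl''D := (hlineD' l'' hl'').resolve_left h2d
            have h1' : ID p l' := (hID'ne _ _ h1d).mp h1
            have h2' : ID p l'' := (hID'ne _ _ h2d).mp h2
            by_cases hld : l = dl
            · rw [hld] at hp1 hp2
              have hl'K : l' ∈ K := (hPar'r l' h1d).mp hp1
              have hl''K : l'' ∈ K := (hPar'r l'' h2d).mp hp2
              obtain ⟨-, m, hm, hmne, hPbm, hparm⟩ := hl'K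
              have hmD := hflD ((hlineB m).mpr ⟨hm, hmne⟩)
              have hl''m : ParD l'' (fl m) := d3 l'' l' (fl m) hl''D hl'D hmD
                (hKpar hl''K ⟨hl'D, m, hm, hmne, hPbm, hparm⟩) hparm
              exact d6 p hpD (fl m) hmD l' l'' hl'D hl''D h1' hparm h2' hl''m
            · have hlD := (hlineD' l hl).resolve_left hld
              exact d6 p hpD l hlD l' l'' hl'D hl''D h1'
                ((hPar'ne l' l h1d hld).mp hp1) h2' ((hPar'ne l'' l h2d hld).mp hp2)
    · -- IsOpen
      intro S hS hSfin hSne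
      by_cases hdlS : Sum.inr dl ∈ S
      · exact ⟨Sum.inr dl, hdlS, hdlfree S⟩
      · have hSD : S ⊆ D := fun x hx =>
          (Set.mem_insert_iff.mp (hS hx)).resolve_left (fun h => hdlS (h ▸ hx))
        obtain ⟨e, heS, he⟩ := pk.open_ S hSD hSfin hSne
        refine ⟨e, heS, hyperfree_congr heS ?_ ?_ he⟩
        · exact fun p l _ hl => (hID'old p l (hSD hl)).symm
        · exact fun l l' hl hl' =>
            (hPar'ne l l' (hDneL l (hSD hl)) (hDneL l' (hSD hl'))).symm
    · -- mapsF
      intro x hx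
      rcases eq_or_ne x (Sum.inr bl) with rfl | hxb
      · rw [hmapb]; exact Set.mem_insert _ _
      · rw [hfeq x ⟨hx, by simpa using hxb⟩]
        exact Set.mem_insert_iff.mpr (Or.inr (pk.mapsF ⟨hx, by simpa using hxb⟩))
    · -- injF
      intro x hx y hy he
      rcases eq_or_ne x (Sum.inr bl) with rfl | hxb
      · rcases eq_or_ne y (Sum.inr bl) with rfl | hyb
        · rfl
        · have hyB' : y ∈ B' := ⟨hy, by simpa using hyb⟩
          rw [hmapb, hfeq y hyB'] at he
          exact absurd (he ▸ pk.mapsF hyB' : Sum.inr dl ∈ D) hfresh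
      · rcases eq_or_ne y (Sum.inr bl) with rfl | hyb
        · have hxB' : x ∈ B' := ⟨hx, by simpa using hxb⟩
          rw [hmapb, hfeq x hxB'] at he
          exact absurd (he ▸ pk.mapsF hxB' : Sum.inr dl ∈ D) hfresh
        · have hxB' : x ∈ B' := ⟨hx, by simpa using hxb⟩
          have hyB' : y ∈ B' := ⟨hy, by simpa using hyb⟩
          rw [hfeq x hxB', hfeq y hyB'] at he
          exact pk.injF hxB' hyB' he
    · -- embIB
      intro p l hp hl
      by_cases hlb : l = bl
      · rw [hlb, hfl'bl]
        rw [hlb] at hl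
        constructor
        · intro h
          obtain ⟨p₁, hp₁, hI₁, heq⟩ := (hID'new (fp p)).mp h
          obtain rfl : p = p₁ := hfpinj hp hp₁ heq
          exact hI₁
        · exact fun h => (hID'new (fp p)).mpr ⟨p, hp, h, rfl⟩
      · rw [hfl'eq l hlb]
        have hlD := hflD ((hlineB l).mpr ⟨hl, hlb⟩)
        rw [hID'old _ _ hlD]
        exact pk.embIB p l ((hptB p).mpr hp) ((hlineB l).mpr ⟨hl, hlb⟩)
    · -- embParB
      intro l l' hl hl'
      by_cases hlb : l = bl
      · by_cases hl'b : l' = bl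
        · rw [hlb, hl'b, hfl'bl]
          exact iff_of_true hPar'll (hBpartial.1 bl hb)
        · rw [hlb, hfl'bl, hfl'eq l' hl'b]
          rw [hlb] at hl
          have hl'D := hflD ((hlineB l').mpr ⟨hl', hl'b⟩)
          rw [hPar'l (fl l') (hDneL _ hl'D)]
          exact hKfl l' hl' hl'b
      · by_cases hl'b : l' = bl
        · rw [hl'b, hfl'bl, hfl'eq l hlb]
          rw [hl'b] at hl'
          have hlD := hflD ((hlineB l).mpr ⟨hl, hlb⟩)
          rw [hPar'r (fl l) (hDneL _ hlD)]
          constructor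
          · intro h
            exact hBpartial.2.1 bl l hb hl ((hKfl l hl hlb).mp h)
          · intro h
            exact (hKfl l hl hlb).mpr (hBpartial.2.1 l bl hl hb h)
        · rw [hfl'eq l hlb, hfl'eq l' hl'b]
          have hlD := hflD ((hlineB l).mpr ⟨hl, hlb⟩)
          have hl'D := hflD ((hlineB l').mpr ⟨hl', hl'b⟩)
          rw [hPar'ne _ _ (hDneL _ hlD) (hDneL _ hl'D)]
          exact pk.embParB l l' ((hlineB l).mpr ⟨hl, hlb⟩) ((hlineB l').mpr ⟨hl', hl'b⟩)
    · -- embIC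
      intro p l hp hl
      have hne : (Sum.inr l : L ⊕ L) ≠ dl := by simp [hdldef]
      rw [hID'ne _ _ hne]
      exact pk.embIC p l hp hl
    · -- embParC
      intro l l' hl hl'
      have hne : (Sum.inr l : L ⊕ L) ≠ dl := by simp [hdldef]
      have hne' : (Sum.inr l' : L ⊕ L) ≠ dl := by simp [hdldef]
      rw [hPar'ne _ _ hne hne']
      exact pk.embParC l l' hl hl'
    · -- agree
      intro x hx
      have hxB' : x ∈ B' ∩ C := ⟨⟨hx.1, by
        simp only [Set.mem_singleton_iff]
        rintro rfl
        exact hbC hx.2⟩, hx.2⟩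
      rw [hfeq x hxB'.1]
      exact pk.agree x hxB'
    · -- openF
      rw [himB]
      intro S hS hSfin hSne
      have hSD : S ⊆ D \ F := by
        intro z hz
        have hz1 := (hS hz).1
        have hz2 := (hS hz).2
        rcases Set.mem_insert_iff.mp hz1 with h | h
        · exact absurd (h ▸ Set.mem_insert _ _) hz2
        · exact ⟨h, fun hzF => hz2 (Set.mem_insert_iff.mpr (Or.inr hzF))⟩
      obtain ⟨e, heS, he⟩ := pk.openF S hSD hSfin hSne
      refine ⟨e, heS, ?_⟩
      rw [Set.insert_union]
      have hFS_D : F ∪ S ⊆ D := Set.union_subset hFD (fun z hz => (hSD hz).1)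
      have he' : Hyperfree ID' Par' (F ∪ S) e := by
        refine hyperfree_congr (Set.mem_union_right _ heS) ?_ ?_ he
        · exact fun p l _ hl => (hID'old p l (hFS_D hl)).symm
        · exact fun l l' hl hl' =>
            (hPar'ne l l' (hDneL l (hFS_D hl)) (hDneL l' (hFS_D hl'))).symm
      refine hyperfree_insert_line he' ?_ ?_
      · rintro ep rfl hIDep
        obtain ⟨p₁, hp₁, hI₁, heq⟩ := (hID'new ep).mp hIDep
        exact (hSD heS).2 (heq ▸ hfpF hp₁)
      · rintro el rfl hnedl
        rcases he' with h | ⟨h2x, hnpx⟩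
        · exact Or.inr h
        · refine Or.inl fun hpe => ?_
          have helD : Sum.inr el ∈ D := (hSD heS).1
          have helK : el ∈ K := (hPar'r el (hDneL el helD)).mp hpe
          obtain ⟨-, m, hm, hmne, hPbm, hparm⟩ := helK
          have hmB' : Sum.inr m ∈ B' := (hlineB m).mpr ⟨hm, hmne⟩
          have hmD := hflD hmB'
          refine hnpx (fl m) (Or.inl (hflF hmB'))
            (fun h => (hSD heS).2 (h ▸ hflF hmB')) ?_
          exact (hPar'ne el (fl m) (hDneL el helD) (hDneL _ hmD)).mpr hparm
    · -- openG
      intro S hS hSfin hSne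
      by_cases hdlS : Sum.inr dl ∈ S
      · exact ⟨Sum.inr dl, hdlS, hdlfree _⟩
      · have hSD : S ⊆ D \ G := by
          intro z hz
          have hz1 := (hS hz).1
          rcases Set.mem_insert_iff.mp hz1 with h | h
          · exact absurd (h ▸ hdlS) (fun hh => hh hz)
          · exact ⟨h, (hS hz).2⟩
        obtain ⟨e, heS, he⟩ := pk.openG S hSD hSfin hSne
        have hGS_D : G ∪ S ⊆ D := Set.union_subset hGD (fun z hz => (hSD hz).1)
        refine ⟨e, heS, hyperfree_congr (Set.mem_union_right _ heS) ?_ ?_ he⟩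
        · exact fun p l _ hl => (hID'old p l (hGS_D hl)).symm
        · exact fun l l' hl hl' =>
            (hPar'ne l l' (hDneL l (hGS_D hl)) (hDneL l' (hGS_D hl'))).symm
    · -- union
      rw [himB, Set.insert_union, ← pk.union]
    · -- inv
      intro x hx
      rcases eq_or_ne x (Sum.inr bl) with rfl | hxb
      · left
        rw [hmapb]
        rfl
      · have hxB' : x ∈ B' := ⟨hx, by simpa using hxb⟩
        rw [hfeq x hxB']
        exact pk.inv x hxB'

end StepLine

section Key

variable {P L : Type}

lemma key (IB IC : P → L → Prop) (ParB ParC : L → L → Prop) (C : Set (P ⊕ L))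
    (hCfin : C.Finite) (hCpartial : IsPartialAffine IC ParC C)
    (hCopen : IsOpen IC ParC C) :
    ∀ n : ℕ, ∀ B : Set (P ⊕ L), (B \ C).ncard = n → B.Finite →
      IsPartialAffine IB ParB B → IsOpen IB ParB B →
      (∀ p l, Sum.inl p ∈ B ∩ C → Sum.inr l ∈ B ∩ C → (IB p l ↔ IC p l)) →
      (∀ l l', Sum.inr l ∈ B ∩ C → Sum.inr l' ∈ B ∩ C → (ParB l l' ↔ ParC l l')) →
      OpenOver IB ParB (B ∩ C) B → OpenOver IC ParC (B ∩ C) C →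
      ∃ ID ParD D fp fl, Pack IB IC ParB ParC B C ID ParD D fp fl := by
  intro n
  induction n with
  | zero =>
    intro B hn hBfin _ _ hI hP _ hAC
    have hBsub : B ⊆ C := by
      have h0 : B \ C = ∅ := (Set.ncard_eq_zero (hBfin.diff (t := C))).mp hn
      exact Set.diff_eq_empty.mp h0
    exact key_base IB IC ParB ParC B C hCfin hCpartial hCopen hI hP hAC hBsub
  | succ n ih =>
    intro B hn hBfin hBpa hBopen hI hP hAB hAC
    have hfin : (B \ C).Finite := hBfin.diff (t := C)
    have hne : (B \ C).Nonempty :=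
      Set.nonempty_of_ncard_ne_zero (by rw [hn]; exact n.succ_ne_zero)
    have hdiffeq : B \ (B ∩ C) = B \ C := Set.diff_self_inter
    obtain ⟨b, hbBC, hfb⟩ := hAB (B \ C) (by rw [hdiffeq]) hfin hne
    have hunion : B ∩ C ∪ B \ C = B := Set.inter_union_diff B C
    rw [hunion] at hfb
    have hbB : b ∈ B := hbBC.1
    have hbC : b ∉ C := hbBC.2
    have hB'C : (B \ {b}) ∩ C = B ∩ C := by
      ext x
      constructor
      · exact fun h => ⟨h.1.1, h.2⟩
      · intro h
        refine ⟨⟨h.1, ?_⟩, h.2⟩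
        simp only [Set.mem_singleton_iff]
        rintro rfl
        exact hbC h.2
    have hB'diff : (B \ {b}) \ C = (B \ C) \ {b} := Set.diff_diff_comm
    have hn' : ((B \ {b}) \ C).ncard = n := by
      rw [hB'diff, Set.ncard_diff_singleton_of_mem hbBC, hn]
      rfl
    have hB'fin : (B \ {b}).Finite := hBfin.diff
    have hB'pa : IsPartialAffine IB ParB (B \ {b}) :=
      isPartialAffine_mono hBpa Set.diff_subset
    have hB'open : IsOpen IB ParB (B \ {b}) := isOpen_mono hBopen Set.diff_subset
    have hI' : ∀ p l, Sum.inl p ∈ (B \ {b}) ∩ C → Sum.inr l ∈ (B \ {b}) ∩ C →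
        (IB p l ↔ IC p l) := by rw [hB'C]; exact hI
    have hP' : ∀ l l', Sum.inr l ∈ (B \ {b}) ∩ C → Sum.inr l' ∈ (B \ {b}) ∩ C →
        (ParB l l' ↔ ParC l l') := by rw [hB'C]; exact hP
    have hAB' : OpenOver IB ParB ((B \ {b}) ∩ C) (B \ {b}) := by
      intro S hS hSfin hSne
      have hS' : S ⊆ B \ (B ∩ C) := by
        intro x hx
        have := hS hx
        rw [hB'C] at this
        exact ⟨this.1.1, this.2⟩
      obtain ⟨c, hcS, hc⟩ := hAB S hS' hSfin hSne
      rw [hB'C]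
      exact ⟨c, hcS, hc⟩
    have hAC' : OpenOver IC ParC ((B \ {b}) ∩ C) C := by rw [hB'C]; exact hAC
    obtain ⟨ID, ParD, D, fp, fl, pk⟩ :=
      ih (B \ {b}) hn' hB'fin hB'pa hB'open hI' hP' hAB' hAC'
    rcases b with bp | bl
    · exact key_step_point IB IC ParB ParC B C bp hBpa hbB hbC hfb pk
    · exact key_step_line IB IC ParB ParC B C bl hBpa hbB hbC hfb pk

end Key


theorem stmt16 {P L : Type}
    (IB IC : P → L → Prop) (ParB ParC : L → L → Prop) (B C : Set (P ⊕ L))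
    (hBfin : B.Finite) (hCfin : C.Finite)
    (hBpartial : IsPartialAffine IB ParB B) (hCpartial : IsPartialAffine IC ParC C)
    (hBopen : IsOpen IB ParB B) (hCopen : IsOpen IC ParC C)
    -- the intersection A = B ∩ C is a common substructure:
    (hagreeI : ∀ (p : P) (l : L), Sum.inl p ∈ B ∩ C → Sum.inr l ∈ B ∩ C →
      (IB p l ↔ IC p l))
    (hagreePar : ∀ l l' : L, Sum.inr l ∈ B ∩ C → Sum.inr l' ∈ B ∩ C →
      (ParB l l' ↔ ParC l l'))
    (hAB : OpenOver IB ParB (B ∩ C) B) (hAC : OpenOver IC ParC (B ∩ C) C) :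
    ∃ (P' L' : Type) (ID : P' → L' → Prop) (ParD : L' → L' → Prop) (D : Set (P' ⊕ L'))
      (fp gp : P → P') (fl gl : L → L'),
      D.Finite ∧ IsPartialAffine ID ParD D ∧ IsOpen ID ParD D ∧
      Set.MapsTo (Sum.map fp fl) B D ∧ Set.MapsTo (Sum.map gp gl) C D ∧
      Set.InjOn (Sum.map fp fl) B ∧ Set.InjOn (Sum.map gp gl) C ∧
      (∀ (p : P) (l : L), Sum.inl p ∈ B → Sum.inr l ∈ B → (ID (fp p) (fl l) ↔ IB p l)) ∧
      (∀ l l' : L, Sum.inr l ∈ B → Sum.inr l' ∈ B → (ParD (fl l) (fl l') ↔ ParB l l')) ∧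
      (∀ (p : P) (l : L), Sum.inl p ∈ C → Sum.inr l ∈ C → (ID (gp p) (gl l) ↔ IC p l)) ∧
      (∀ l l' : L, Sum.inr l ∈ C → Sum.inr l' ∈ C → (ParD (gl l) (gl l') ↔ ParC l l')) ∧
      (∀ x ∈ B ∩ C, Sum.map fp fl x = Sum.map gp gl x) ∧
      OpenOver ID ParD (Sum.map fp fl '' B) D ∧
      OpenOver ID ParD (Sum.map gp gl '' C) D := by
  obtain ⟨ID, ParD, D, fp, fl, pk⟩ := key IB IC ParB ParC C hCfin hCpartial hCopen
    (B \ C).ncard B rfl hBfin hBpartial hBopen hagreeI hagreePar hAB hAC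
  exact ⟨P ⊕ P, L ⊕ L, ID, ParD, D, fp, Sum.inr, fl, Sum.inr,
    pk.fin, pk.pa, pk.open_, pk.mapsF, pk.mapsG, pk.injF, ginj.injOn,
    pk.embIB, pk.embParB, pk.embIC, pk.embParC, pk.agree, pk.openF, pk.openG⟩
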